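/- Let (Xₙ) be a random walk with P(ξ > 0) > 0, q ≥ 0, and g : ℝ → [0,∞) nonconstant, increasing, logconcave. Suppose E_y[e^{-q T_y} g(X_{T_y}) 1_{T_y<∞}] ≥ g(y) for some y > x₀ := inf{s : g(s) > 0}. Then g(x) ≤ E_x[e^{-q τ_y} g(X_{τ_y}) 1_{τ_y<∞}] for all x < y. -/

import Mathlib

open MeasureTheory ProbabilityTheory Real

variable {Ω : Type*}

/-- The random walk `X n = x + ξ 1 + ... + ξ n` (increments indexed from 1). -/
noncomputable def walk (x : ℝ) (ξ : ℕ → Ω → ℝ) (n : ℕ) (ω : Ω) : ℝ :=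
  x + ∑ i ∈ Finset.range n, ξ (i + 1) ω

/-- `τ_v`: first time `n ≥ 0` with `X n ≥ v` (`⊤` if never). -/
noncomputable def hitFrom0 (X : ℕ → Ω → ℝ) (v : ℝ) (ω : Ω) : ℕ∞ :=
  ⨅ n ∈ {n : ℕ | v ≤ X n ω}, (n : ℕ∞)

/-- `T_v`: first time `n ≥ 1` with `X n ≥ v` (`⊤` if never). -/
noncomputable def hitFrom1 (X : ℕ → Ω → ℝ) (v : ℝ) (ω : Ω) : ℕ∞ :=
  ⨅ n ∈ {n : ℕ | 1 ≤ n ∧ v ≤ X n ω}, (n : ℕ∞)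

/-- The discounted reward `e^{-qτ} g(X_τ) 1_{τ<∞}`, as an `ℝ≥0∞`-valued r.v. -/
noncomputable def payoff (q : ℝ) (g : ℝ → ℝ) (X : ℕ → Ω → ℝ) (τ : Ω → ℕ∞) (ω : Ω) : ENNReal :=
  if τ ω = ⊤ then 0
  else ENNReal.ofReal (Real.exp (-q * ((τ ω).toNat : ℝ)) * g (X ((τ ω).toNat) ω))

/-- The natural filtration (as σ-algebras) of the process `X`. -/
def natSigma [MeasurableSpace Ω] (X : ℕ → Ω → ℝ) (n : ℕ) : MeasurableSpace Ω :=
  ⨆ i ∈ Set.Iic n, MeasurableSpace.comap (X i) inferInstance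

/-- `τ` is a stopping time (with values in `ℕ ∪ {∞}`) of the natural filtration of `X`. -/
def IsStopping [MeasurableSpace Ω] (X : ℕ → Ω → ℝ) (τ : Ω → ℕ∞) : Prop :=
  ∀ n : ℕ, MeasurableSet[natSigma X n] {ω | τ ω ≤ (n : ℕ∞)}


namespace Stmt9Aux

/-! ### Path combinatorics: records (weak ascending ladder epochs) -/

noncomputable def psum (u : ℕ → ℝ) (k : ℕ) : ℝ := ∑ i ∈ Finset.range k, u i

def isRec (u : ℕ → ℝ) (n : ℕ) : Prop := ∀ j < n, psum u j ≤ psum u n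

open Classical in
noncomputable def cnt (u : ℕ → ℝ) (n : ℕ) : ℕ :=
  ∑ j ∈ Finset.range n, if isRec u j then 1 else 0

lemma psum_zero (u : ℕ → ℝ) : psum u 0 = 0 := rfl

lemma psum_succ (u : ℕ → ℝ) (n : ℕ) : psum u (n+1) = psum u n + u n :=
  Finset.sum_range_succ _ _

lemma isRec_zero (u : ℕ → ℝ) : isRec u 0 := fun j hj => absurd hj (Nat.not_lt_zero j)

lemma cnt_zero (u : ℕ → ℝ) : cnt u 0 = 0 := rfl

open Classical in
lemma cnt_succ (u : ℕ → ℝ) (n : ℕ) :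
    cnt u (n+1) = cnt u n + if isRec u n then 1 else 0 := Finset.sum_range_succ _ _

lemma rec_nonneg {u : ℕ → ℝ} {n : ℕ} (h : isRec u n) : 0 ≤ psum u n := by
  rcases Nat.eq_zero_or_pos n with h0 | h0
  · simp [h0, psum_zero]
  · simpa [psum_zero] using h 0 h0

lemma cnt_mono {u : ℕ → ℝ} : Monotone (cnt u) := by
  intro a b hab
  classical
  exact Finset.sum_le_sum_of_subset (Finset.range_subset_range.2 hab)

lemma cnt_lt_of_rec {u : ℕ → ℝ} {n n' : ℕ} (h : isRec u n) (hlt : n < n') :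
    cnt u n < cnt u n' := by
  have h1 : cnt u n < cnt u (n+1) := by
    rw [cnt_succ, if_pos h]; omega
  exact lt_of_lt_of_le h1 (cnt_mono hlt)

lemma rec_cnt_unique {u : ℕ → ℝ} {n n' : ℕ} (h : isRec u n) (h' : isRec u n')
    (hc : cnt u n = cnt u n') : n = n' := by
  rcases lt_trichotomy n n' with hlt | he | hgt
  · exact absurd hc (Nat.ne_of_lt (cnt_lt_of_rec h hlt))
  · exact he
  · exact absurd hc.symm (Nat.ne_of_lt (cnt_lt_of_rec h' hgt))

lemma cnt_congr_gap {u : ℕ → ℝ} {a b : ℕ} (hab : a ≤ b)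
    (h : ∀ j, a ≤ j → j < b → ¬ isRec u j) : cnt u b = cnt u a := by
  induction b with
  | zero =>
      have ha : a = 0 := by omega
      rw [ha]
  | succ b ih =>
      rcases Nat.eq_or_lt_of_le hab with he | hlt
      · rw [he]
      · have hb : a ≤ b := by omega
        rw [cnt_succ, if_neg (h b hb (Nat.lt_succ_self b)), add_zero]
        exact ih hb (fun j hj hj' => h j hj (by omega))

def shiftSeq (u : ℕ → ℝ) (n : ℕ) : ℕ → ℝ := fun i => u (n + i)

lemma psum_shiftSeq (u : ℕ → ℝ) (n : ℕ) : ∀ j, psum (shiftSeq u n) j = psum u (n + j) - psum u n := by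
  intro j
  induction j with
  | zero => simp [psum_zero]
  | succ j ih =>
      rw [psum_succ, ih, ← Nat.add_assoc, psum_succ]
      simp [shiftSeq]
      ring

/-- between a record `n` and the next record `n'`, all partial sums are `< psum u n`. -/
lemma gap_lt {u : ℕ → ℝ} {n n' : ℕ} (hrec : isRec u n)
    (hnorec : ∀ j, n < j → j < n' → ¬ isRec u j) :
    ∀ j, n < j → j < n' → psum u j < psum u n := by
  intro j
  induction j using Nat.strong_induction_on with
  | _ j ih =>
    intro hj hj'
    by_contra hge
    push_neg at hge
    apply hnorec j hj hj'
    intro i hi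
    rcases lt_trichotomy i n with h1 | h1 | h1
    · exact le_trans (hrec i h1) hge
    · exact h1 ▸ hge
    · exact le_of_lt (lt_of_lt_of_le (ih i hi h1 (by omega)) hge)

/-- the largest record strictly below a record `n'` with positive count. -/
lemma largest_record {u : ℕ → ℝ} {n' M : ℕ} (h : isRec u n') (hM : cnt u n' = M + 1) :
    ∃ n < n', isRec u n ∧ cnt u n = M ∧
      (∀ j, n < j → j < n' → psum u j < psum u n) ∧ psum u n ≤ psum u n' := by
  classical
  have hn' : 0 < n' := by
    rcases Nat.eq_zero_or_pos n' with h0 | h0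
    · rw [h0, cnt_zero] at hM; omega
    · exact h0
  -- the set of records below n'
  have h0mem : 0 ∈ (Finset.range n').filter (fun j => isRec u j) := by
    simp [Finset.mem_filter, Finset.mem_range, hn', isRec_zero]
  set P := (Finset.range n').filter (fun j => isRec u j) with hP
  have hne : P.Nonempty := ⟨0, h0mem⟩
  set n := P.max' hne with hn
  have hmem : n ∈ P := P.max'_mem hne
  have hnlt : n < n' := (Finset.mem_range.1 (Finset.mem_filter.1 hmem).1)
  have hnrec : isRec u n := by
    have := (Finset.mem_filter.1 hmem).2; simpa using this
  have hnorec : ∀ j, n < j → j < n' → ¬ isRec u j := by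
    intro j hj hj' hrecj
    have : j ∈ P := Finset.mem_filter.2 ⟨Finset.mem_range.2 hj', by simpa using hrecj⟩
    exact absurd (P.le_max' j this) (by omega)
  have hgap := gap_lt hnrec hnorec
  have hcnt : cnt u n = M := by
    have h1 : cnt u n' = cnt u (n+1) :=
      cnt_congr_gap (by omega) (fun j hj hj' => hnorec j (by omega) hj')
    rw [cnt_succ, if_pos hnrec] at h1
    omega
  exact ⟨n, hnlt, hnrec, hcnt, hgap, h n hnlt⟩


/-! ### The ladder predicates -/

/-- `T_m = n` and ladder height still `< c` (continue region). -/
def Bp (c : ℝ) (m n : ℕ) (u : ℕ → ℝ) : Prop :=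
  isRec u n ∧ cnt u n = m ∧ psum u n < c

/-- `T_m = n` and the walk crosses `c` exactly at the `m`-th ladder epoch. -/
def Ap (c : ℝ) (m n : ℕ) (u : ℕ → ℝ) : Prop :=
  isRec u n ∧ cnt u n = m ∧ c ≤ psum u n ∧ ∀ j < n, isRec u j → psum u j < c

/-- `T_m = n` and all ladder heights before `n` are `< c`. -/
def Cp (c : ℝ) (m n : ℕ) (u : ℕ → ℝ) : Prop :=
  isRec u n ∧ cnt u n = m ∧ ∀ j < n, isRec u j → psum u j < c

/-- first (weak) ladder epoch of the shifted walk occurs at `l`. -/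
def Ep (l : ℕ) (u : ℕ → ℝ) : Prop :=
  1 ≤ l ∧ 0 ≤ psum u l ∧ ∀ j, 1 ≤ j → j < l → psum u j < 0

/-- first crossing of level `c` at time `n`. -/
def Fp (c : ℝ) (n : ℕ) (u : ℕ → ℝ) : Prop :=
  c ≤ psum u n ∧ ∀ j < n, psum u j < c

lemma Bp_unique {c : ℝ} {m n n' : ℕ} {u : ℕ → ℝ} (h : Bp c m n u) (h' : Bp c m n' u) :
    n = n' := rec_cnt_unique h.1 h'.1 (h.2.1.trans h'.2.1.symm)

lemma Cp_unique {c : ℝ} {m n n' : ℕ} {u : ℕ → ℝ} (h : Cp c m n u) (h' : Cp c m n' u) :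
    n = n' := rec_cnt_unique h.1 h'.1 (h.2.1.trans h'.2.1.symm)

lemma Fp_unique {c : ℝ} {n n' : ℕ} {u : ℕ → ℝ} (h : Fp c n u) (h' : Fp c n' u) :
    n = n' := by
  by_contra hne
  rcases Nat.lt_or_ge n n' with hlt | hge
  · exact absurd h.1 (not_le.2 (h'.2 n hlt))
  · have : n' < n := by omega
    exact absurd h'.1 (not_le.2 (h.2 n' this))

lemma Cp_iff_ApBp {c : ℝ} {m n : ℕ} {u : ℕ → ℝ} :
    Cp c m n u ↔ (Ap c m n u ∨ Bp c m n u) := by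
  constructor
  · rintro ⟨h1, h2, h3⟩
    rcases lt_or_ge (psum u n) c with h | h
    · exact Or.inr ⟨h1, h2, h⟩
    · exact Or.inl ⟨h1, h2, h, h3⟩
  · rintro (⟨h1, h2, h3, h4⟩ | ⟨h1, h2, h3⟩)
    · exact ⟨h1, h2, h4⟩
    · exact ⟨h1, h2, fun j hj hrecj => lt_of_le_of_lt (h1 j hj) h3⟩

lemma Ap_Bp_disjoint {c : ℝ} {m n : ℕ} {u : ℕ → ℝ} (h : Ap c m n u) (h' : Bp c m n u) :
    False := absurd h.2.2.1 (not_le.2 h'.2.2)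

/-- if the walk ever reaches `c` before `n`, some record before `n` has height `≥ c`. -/
lemma first_cross_rec {c : ℝ} {n : ℕ} {u : ℕ → ℝ} (hc : 0 < c)
    (h : c ≤ psum u n) : ∃ j ≤ n, isRec u j ∧ c ≤ psum u j ∧ ∀ i < j, psum u i < c := by
  classical
  have hex : ∃ j, c ≤ psum u j := ⟨n, h⟩
  set j := Nat.find hex with hj
  have hj1 : c ≤ psum u j := Nat.find_spec hex
  have hmin : ∀ i < j, psum u i < c := fun i hi => not_le.1 (Nat.find_min hex hi)
  have hjn : j ≤ n := Nat.find_le h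
  exact ⟨j, hjn, fun i hi => le_trans (le_of_lt (hmin i hi)) hj1, hj1, hmin⟩

/-- decomposition `F_n = ⋃_m A_{m+1,n}` for `0 < c`. -/
lemma Fp_iff_exists_Ap {c : ℝ} {n : ℕ} {u : ℕ → ℝ} (hc : 0 < c) :
    Fp c n u ↔ ∃ m, Ap c (m+1) n u := by
  constructor
  · rintro ⟨h1, h2⟩
    have hrec : isRec u n := fun j hj => le_trans (le_of_lt (h2 j hj)) h1
    have hn : 0 < n := by
      rcases Nat.eq_zero_or_pos n with h0 | h0
      · rw [h0, psum_zero] at h1; linarith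
      · exact h0
    have hcnt : 0 < cnt u n := by
      have := cnt_lt_of_rec (isRec_zero u) hn
      rw [cnt_zero] at this; omega
    exact ⟨cnt u n - 1, hrec, by omega, h1, fun j hj _ => h2 j hj⟩
  · rintro ⟨m, h1, h2, h3, h4⟩
    refine ⟨h3, fun j hj => ?_⟩
    by_contra hge
    push_neg at hge
    obtain ⟨i, hi, hreci, hci, _⟩ := first_cross_rec hc hge
    exact absurd (h4 i (by omega) hreci) (not_lt.2 hci)

lemma Ap_unique_m {c : ℝ} {m m' n : ℕ} {u : ℕ → ℝ} (h : Ap c m n u) (h' : Ap c m' n u) :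
    m = m' := h.2.1.symm.trans h'.2.1

/-- forward direction of the ladder-step decomposition. -/
lemma Cp_of_Bp_Ep {c : ℝ} {m n l : ℕ} {u : ℕ → ℝ}
    (hB : Bp c m n u) (hE : Ep l (shiftSeq u n)) : Cp c (m+1) (n+l) u := by
  obtain ⟨hrec, hcnt, hlt⟩ := hB
  obtain ⟨hl1, hE0, hEneg⟩ := hE
  have hps : ∀ j, psum (shiftSeq u n) j = psum u (n+j) - psum u n := psum_shiftSeq u n
  have hmid : ∀ j, n < j → j < n + l → psum u j < psum u n := by
    intro j hj hj'
    have := hEneg (j - n) (by omega) (by omega)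
    rw [hps (j-n)] at this
    have hnn : n + (j - n) = j := by omega
    rw [hnn] at this; linarith
  have hsum : psum u n ≤ psum u (n+l) := by
    have := hE0; rw [hps l] at this; linarith
  have hrec' : isRec u (n+l) := by
    intro j hj
    rcases lt_trichotomy j n with h1 | h1 | h1
    · exact le_trans (hrec j h1) hsum
    · exact h1 ▸ hsum
    · exact le_trans (le_of_lt (hmid j h1 hj)) hsum
  have hnorec : ∀ j, n < j → j < n + l → ¬ isRec u j := by
    intro j hj hj' hrecj
    exact absurd (hrecj n hj) (not_le.2 (hmid j hj hj'))
  have hcnt' : cnt u (n+l) = m + 1 := by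
    have h1 : cnt u (n+l) = cnt u (n+1) :=
      cnt_congr_gap (by omega) (fun j hj hj' => hnorec j (by omega) hj')
    rw [h1, cnt_succ, if_pos hrec, hcnt]
  refine ⟨hrec', hcnt', fun j hj hrecj => ?_⟩
  rcases lt_trichotomy j n with h1 | h1 | h1
  · exact lt_of_le_of_lt (hrec j h1) hlt
  · exact h1 ▸ hlt
  · exact absurd hrecj (hnorec j h1 hj)

/-- backward direction: every `C_{m+1}` time decomposes uniquely. -/
lemma Cp_decomp {c : ℝ} {m n' : ℕ} {u : ℕ → ℝ} (h : Cp c (m+1) n' u) :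
    ∃ n, n < n' ∧ Bp c m n u ∧ Ep (n' - n) (shiftSeq u n) := by
  obtain ⟨hrec, hcnt, hprev⟩ := h
  obtain ⟨n, hlt, hnrec, hncnt, hgap, hle⟩ := largest_record hrec hcnt
  have hps : ∀ j, psum (shiftSeq u n) j = psum u (n+j) - psum u n := psum_shiftSeq u n
  refine ⟨n, hlt, ⟨hnrec, hncnt, hprev n hlt hnrec⟩, by omega, ?_, ?_⟩
  · rw [hps]
    have : n + (n' - n) = n' := by omega
    rw [this]; linarith
  · intro j hj1 hj2
    rw [hps]
    have := hgap (n+j) (by omega) (by omega)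
    linarith

/-- uniqueness of the decomposition point. -/
lemma Bp_Ep_unique {c : ℝ} {m n₁ n₂ l₁ l₂ : ℕ} {u : ℕ → ℝ}
    (h₁ : Bp c m n₁ u) (_ : Ep l₁ (shiftSeq u n₁))
    (h₂ : Bp c m n₂ u) (_ : Ep l₂ (shiftSeq u n₂)) : n₁ = n₂ :=
  Bp_unique h₁ h₂

/-! ### Climbing and decay -/

lemma climb {u : ℕ → ℝ} {n m N : ℕ} {δ : ℝ} (hδ : 0 < δ)
    (hrec : isRec u n) (hcnt : cnt u n = m) (hsteps : ∀ j < N, δ ≤ u (n + j)) :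
    isRec u (n + N) ∧ cnt u (n + N) = m + N ∧ psum u n + N * δ ≤ psum u (n + N) := by
  induction N with
  | zero => simpa using ⟨hrec, hcnt⟩
  | succ N ih =>
      obtain ⟨hrec', hcnt', hsum'⟩ := ih (fun j hj => hsteps j (by omega))
      have hstep : δ ≤ u (n + N) := hsteps N (by omega)
      have hps : psum u (n + N + 1) = psum u (n + N) + u (n + N) := psum_succ u (n + N)
      have hrec'' : isRec u (n + N + 1) := by
        intro j hj
        have h1 : psum u (n+N) ≤ psum u (n+N+1) := by nlinarith
        rcases Nat.lt_or_ge j (n+N) with h2 | h2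
        · exact le_trans (hrec' j h2) h1
        · have : j = n + N := by omega
          exact this ▸ h1
      have e : n + (N+1) = (n+N)+1 := rfl
      refine ⟨by rw [e]; exact hrec'', ?_, ?_⟩
      · rw [e, cnt_succ, if_pos hrec', hcnt']; omega
      · rw [e, hps]
        push_cast
        nlinarith

lemma decay_path {c δ : ℝ} {m N n' : ℕ} {u : ℕ → ℝ} (hδ : 0 < δ)
    (hN : c ≤ N * δ) (h : Bp c (m + N) n' u) :
    ∃ n, Bp c m n u ∧ ¬ ∀ j < N, δ ≤ u (n + j) := by
  obtain ⟨hrec, hcnt, hlt⟩ := h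
  -- walk down N records
  have key : ∀ k ≤ N, ∃ n, isRec u n ∧ cnt u n = m + N - k ∧ psum u n ≤ psum u n' := by
    intro k hk
    induction k with
    | zero => exact ⟨n', hrec, by omega, le_refl _⟩
    | succ k ih =>
        obtain ⟨n, h1, h2, h3⟩ := ih (by omega)
        have : cnt u n = (m + N - (k+1)) + 1 := by omega
        obtain ⟨n₀, _, h4, h5, _, h6⟩ := largest_record h1 this
        exact ⟨n₀, h4, h5, le_trans h6 h3⟩
  obtain ⟨n, h1, h2, h3⟩ := key N (le_refl N)
  have h2' : cnt u n = m := by omega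
  refine ⟨n, ⟨h1, h2', lt_of_le_of_lt h3 hlt⟩, ?_⟩
  intro hall
  obtain ⟨hrec2, hcnt2, hsum2⟩ := climb hδ h1 h2' hall
  have hn' : n + N = n' := rec_cnt_unique hrec2 hrec (by omega)
  have h0 : 0 ≤ psum u n := rec_nonneg h1
  rw [hn'] at hsum2
  linarith


/-! ### Increment vectors and their laws -/

open MeasureTheory ProbabilityTheory ENNReal

variable {Ω : Type*} [MeasurableSpace Ω]

/-- the increment sequence (0-indexed): `inc ξ ω i = ξ (i+1) ω`. -/
def inc (ξ : ℕ → Ω → ℝ) (ω : Ω) : ℕ → ℝ := fun i => ξ (i+1) ω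

/-- the vector of `k` increments after time `n`. -/
def Vv (ξ : ℕ → Ω → ℝ) (n k : ℕ) (ω : Ω) : Fin k → ℝ := fun i => ξ (n + i + 1) ω

/-- extension of a finite tuple by zeros. -/
def ext {k : ℕ} (v : Fin k → ℝ) : ℕ → ℝ := fun i => if h : i < k then v ⟨i, h⟩ else 0

lemma ext_Vv {ξ : ℕ → Ω → ℝ} {n k : ℕ} {ω : Ω} :
    ∀ i < k, ext (Vv ξ n k ω) i = shiftSeq (inc ξ ω) n i := by
  intro i hi
  simp only [ext, Vv, shiftSeq, inc, dif_pos hi]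

lemma ext_Vv0 {ξ : ℕ → Ω → ℝ} {k : ℕ} {ω : Ω} :
    ∀ i < k, ext (Vv ξ 0 k ω) i = inc ξ ω i := by
  intro i hi
  simp only [ext, Vv, inc, dif_pos hi]
  norm_num

/-! ### congruence lemmas: the predicates only read the first coordinates -/

lemma psum_congr {u v : ℕ → ℝ} {k : ℕ} (h : ∀ i < k, u i = v i) :
    ∀ j ≤ k, psum u j = psum v j := by
  intro j hj
  unfold psum
  exact Finset.sum_congr rfl (fun i hi => h i (by have := Finset.mem_range.1 hi; omega))

lemma isRec_congr {u v : ℕ → ℝ} {k n : ℕ} (h : ∀ i < k, u i = v i) (hn : n ≤ k) :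
    isRec u n ↔ isRec v n := by
  unfold isRec
  constructor <;> intro h' j hj <;>
    [rw [← psum_congr h j (by omega), ← psum_congr h n hn]; rw [psum_congr h j (by omega), psum_congr h n hn]] <;>
    exact h' j hj

lemma cnt_congr {u v : ℕ → ℝ} {k n : ℕ} (h : ∀ i < k, u i = v i) (hn : n ≤ k) :
    cnt u n = cnt v n := by
  classical
  unfold cnt
  refine Finset.sum_congr rfl (fun j hj => ?_)
  have hjk : j ≤ k := by have := Finset.mem_range.1 hj; omega
  by_cases hr : isRec u j
  · rw [if_pos hr, if_pos ((isRec_congr h hjk).1 hr)]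
  · rw [if_neg hr, if_neg (fun hc => hr ((isRec_congr h hjk).2 hc))]

lemma Bp_congr {u v : ℕ → ℝ} {c : ℝ} {m n : ℕ} (h : ∀ i < n, u i = v i) :
    Bp c m n u ↔ Bp c m n v := by
  unfold Bp
  rw [isRec_congr h (le_refl n), cnt_congr h (le_refl n), psum_congr h n (le_refl n)]

lemma Ep_congr {u v : ℕ → ℝ} {l : ℕ} (h : ∀ i < l, u i = v i) :
    Ep l u ↔ Ep l v := by
  unfold Ep
  constructor <;> rintro ⟨h1, h2, h3⟩ <;> refine ⟨h1, ?_, fun j hj hj' => ?_⟩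
  · rwa [← psum_congr h l (le_refl l)]
  · rw [← psum_congr h j (by omega)]; exact h3 j hj hj'
  · rwa [psum_congr h l (le_refl l)]
  · rw [psum_congr h j (by omega)]; exact h3 j hj hj'

/-! ### measurability on tuple spaces -/

lemma measurable_ext_app {k : ℕ} (i : ℕ) : Measurable (fun v : Fin k → ℝ => ext v i) := by
  unfold ext
  by_cases h : i < k
  · simp only [dif_pos h]; exact measurable_pi_apply _
  · simp only [dif_neg h]; exact measurable_const

lemma measurable_psum_ext {k : ℕ} (j : ℕ) :
    Measurable (fun v : Fin k → ℝ => psum (ext v) j) := by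
  unfold psum
  exact Finset.measurable_sum _ (fun i _ => measurable_ext_app i)

lemma measurableSet_isRec_ext {k : ℕ} (n : ℕ) :
    MeasurableSet {v : Fin k → ℝ | isRec (ext v) n} := by
  have : {v : Fin k → ℝ | isRec (ext v) n}
      = ⋂ j ∈ Set.Iio n, {v : Fin k → ℝ | psum (ext v) j ≤ psum (ext v) n} := by
    ext v; simp [isRec]
  rw [this]
  exact MeasurableSet.biInter (Set.to_countable _)
    (fun j _ => measurableSet_le (measurable_psum_ext j) (measurable_psum_ext n))

lemma measurable_cnt_ext {k : ℕ} (n : ℕ) :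
    Measurable (fun v : Fin k → ℝ => cnt (ext v) n) := by
  classical
  unfold cnt
  refine Finset.measurable_sum _ (fun j _ => Measurable.ite (measurableSet_isRec_ext j) measurable_const measurable_const)

lemma measurableSet_Bp_ext {k : ℕ} (c : ℝ) (m n : ℕ) :
    MeasurableSet {v : Fin k → ℝ | Bp c m n (ext v)} := by
  have : {v : Fin k → ℝ | Bp c m n (ext v)}
      = {v : Fin k → ℝ | isRec (ext v) n} ∩ ((fun v : Fin k → ℝ => cnt (ext v) n) ⁻¹' {m})
        ∩ {v : Fin k → ℝ | psum (ext v) n < c} := by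
    ext v; simp [Bp, Set.mem_setOf_eq, and_assoc]
  rw [this]
  exact ((measurableSet_isRec_ext n).inter ((measurable_cnt_ext n) (measurableSet_singleton m))).inter
    (measurableSet_lt (measurable_psum_ext n) measurable_const)

lemma measurableSet_Ep_ext {k : ℕ} (l : ℕ) :
    MeasurableSet {v : Fin k → ℝ | Ep l (ext v)} := by
  by_cases hl : 1 ≤ l
  · have : {v : Fin k → ℝ | Ep l (ext v)}
        = {v : Fin k → ℝ | 0 ≤ psum (ext v) l}
          ∩ ⋂ j ∈ Set.Ico 1 l, {v : Fin k → ℝ | psum (ext v) j < 0} := by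
      ext v; simp [Ep, Set.mem_setOf_eq, hl]
    rw [this]
    exact (measurableSet_le measurable_const (measurable_psum_ext l)).inter
      (MeasurableSet.biInter (Set.to_countable _)
        (fun j _ => measurableSet_lt (measurable_psum_ext j) measurable_const))
  · have : {v : Fin k → ℝ | Ep l (ext v)} = ∅ := by
      ext v; simp [Ep, Set.mem_setOf_eq]; intro h; omega
    rw [this]; exact MeasurableSet.empty

lemma measurable_Vv {ξ : ℕ → Ω → ℝ} (hmeas : ∀ i, Measurable (ξ i)) (n k : ℕ) :
    Measurable (Vv ξ n k) :=
  measurable_pi_lambda _ (fun i => hmeas _)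

/-! ### law of increment vectors -/

lemma map_Vv_pi {μ : Measure Ω} [IsProbabilityMeasure μ] {ξ : ℕ → Ω → ℝ}
    (hmeas : ∀ i, Measurable (ξ i))
    (hindep : iIndepFun ξ μ)
    (hident : ∀ i, μ.map (ξ i) = μ.map (ξ 1)) (n k : ℕ) :
    μ.map (Vv ξ n k) = Measure.pi (fun _ : Fin k => μ.map (ξ 1)) := by
  haveI : IsProbabilityMeasure (μ.map (ξ 1)) :=
    Measure.isProbabilityMeasure_map (hmeas 1).aemeasurable
  refine (Measure.pi_eq fun s hs => ?_).symm
  rw [Measure.map_apply (measurable_Vv hmeas n k) (MeasurableSet.univ_pi hs)]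
  classical
  set e : Fin k → ℕ := fun i => n + i + 1 with he
  have hinj : Function.Injective e := by
    intro a b hab
    simp only [he] at hab
    exact Fin.ext (by omega)
  set sets : ℕ → Set ℝ := fun j => ⋂ (i : Fin k) (_ : e i = j), s i with hsets
  have hsets_e : ∀ i : Fin k, sets (e i) = s i := by
    intro i
    apply Set.Subset.antisymm
    · intro x hx
      simp only [hsets, Set.mem_iInter] at hx
      exact hx i rfl
    · intro x hx
      simp only [hsets, Set.mem_iInter]
      intro i' hi'
      cases hinj hi'
      exact hx
  have hmsets : ∀ j, MeasurableSet (sets j) :=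
    fun j => MeasurableSet.iInter (fun i => MeasurableSet.iInter (fun _ => hs i))
  have hpre : Vv ξ n k ⁻¹' Set.pi Set.univ s = ⋂ j ∈ Finset.image e Finset.univ, ξ j ⁻¹' sets j := by
    ext ω
    simp only [Set.mem_preimage, Set.mem_pi, Set.mem_univ, forall_true_left, Set.mem_iInter,
      Finset.mem_image, Finset.mem_univ, true_and]
    constructor
    · rintro h j ⟨i, rfl⟩
      rw [hsets_e i]
      exact h i
    · intro h i
      have := h (e i) ⟨i, rfl⟩
      rwa [hsets_e i] at this
  rw [hpre, hindep.measure_inter_preimage_eq_mul _ (fun j _ => hmsets j),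
    Finset.prod_image (fun a _ b _ hab => hinj hab)]
  refine Finset.prod_congr rfl (fun i _ => ?_)
  rw [hsets_e i, ← Measure.map_apply (hmeas (e i)) (hs i), hident (e i)]

lemma indep_V {μ : Measure Ω} {ξ : ℕ → Ω → ℝ}
    (hmeas : ∀ i, Measurable (ξ i))
    (hindep : iIndepFun ξ μ) (n k : ℕ) :
    IndepFun (Vv ξ 0 n) (Vv ξ n k) μ := by
  classical
  have hdisj : Disjoint (Finset.Icc 1 n) (Finset.Icc (n+1) (n+k)) := by
    rw [Finset.disjoint_left]
    intro a ha hb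
    simp only [Finset.mem_Icc] at ha hb
    omega
  have h := hindep.indepFun_finset (Finset.Icc 1 n) (Finset.Icc (n+1) (n+k)) hdisj hmeas
  have hφ : Measurable (fun (v : {j // j ∈ Finset.Icc 1 n} → ℝ) (i : Fin n) =>
      v ⟨i + 1, by simp only [Finset.mem_Icc]; omega⟩) :=
    measurable_pi_lambda _ (fun i => measurable_pi_apply _)
  have hψ : Measurable (fun (v : {j // j ∈ Finset.Icc (n+1) (n+k)} → ℝ) (i : Fin k) =>
      v ⟨n + i + 1, by simp only [Finset.mem_Icc]; omega⟩) :=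
    measurable_pi_lambda _ (fun i => measurable_pi_apply _)
  have := h.comp hφ hψ
  have e1 : (fun (v : {j // j ∈ Finset.Icc 1 n} → ℝ) (i : Fin n) =>
      v ⟨i + 1, by simp only [Finset.mem_Icc]; omega⟩) ∘ (fun a (i : {j // j ∈ Finset.Icc 1 n}) => ξ i a)
      = Vv ξ 0 n := by
    funext ω i
    simp only [Function.comp_apply, Vv]
    norm_num
  have e2 : (fun (v : {j // j ∈ Finset.Icc (n+1) (n+k)} → ℝ) (i : Fin k) =>
      v ⟨n + i + 1, by simp only [Finset.mem_Icc]; omega⟩) ∘ (fun a (i : {j // j ∈ Finset.Icc (n+1) (n+k)}) => ξ i a)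
      = Vv ξ n k := by
    funext ω i
    simp only [Function.comp_apply, Vv]
  rwa [e1, e2] at this

lemma lintegral_map_Vv {μ : Measure Ω} {ξ : ℕ → Ω → ℝ}
    (hmeas : ∀ i, Measurable (ξ i)) (n k : ℕ)
    (K : (Fin k → ℝ) → ℝ≥0∞) (hK : Measurable K) :
    ∫⁻ v, K v ∂(μ.map (Vv ξ n k)) = ∫⁻ ω, K (Vv ξ n k ω) ∂μ :=
  lintegral_map hK (measurable_Vv hmeas n k)

/-- the master splitting lemma. -/
lemma lintegral_split {μ : Measure Ω} [IsProbabilityMeasure μ] {ξ : ℕ → Ω → ℝ}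
    (hmeas : ∀ i, Measurable (ξ i))
    (hindep : iIndepFun ξ μ)
    (hident : ∀ i, μ.map (ξ i) = μ.map (ξ 1)) (n k : ℕ)
    (H : (Fin n → ℝ) → (Fin k → ℝ) → ℝ≥0∞) (hH : Measurable (Function.uncurry H)) :
    ∫⁻ ω, H (Vv ξ 0 n ω) (Vv ξ n k ω) ∂μ
      = ∫⁻ u, ∫⁻ v, H u v ∂(μ.map (Vv ξ 0 k)) ∂(μ.map (Vv ξ 0 n)) := by
  haveI : IsProbabilityMeasure (μ.map (Vv ξ n k)) :=
    Measure.isProbabilityMeasure_map (measurable_Vv hmeas n k).aemeasurable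
  have hpair : Measurable (fun ω => (Vv ξ 0 n ω, Vv ξ n k ω)) :=
    (measurable_Vv hmeas 0 n).prodMk (measurable_Vv hmeas n k)
  have hmap : μ.map (fun ω => (Vv ξ 0 n ω, Vv ξ n k ω))
      = (μ.map (Vv ξ 0 n)).prod (μ.map (Vv ξ n k)) :=
    (indepFun_iff_map_prod_eq_prod_map_map (measurable_Vv hmeas 0 n).aemeasurable
      (measurable_Vv hmeas n k).aemeasurable).1 (indep_V hmeas hindep n k)
  calc ∫⁻ ω, H (Vv ξ 0 n ω) (Vv ξ n k ω) ∂μ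
      = ∫⁻ p, Function.uncurry H p ∂(μ.map (fun ω => (Vv ξ 0 n ω, Vv ξ n k ω))) :=
        (lintegral_map hH hpair).symm
    _ = ∫⁻ p, Function.uncurry H p ∂((μ.map (Vv ξ 0 n)).prod (μ.map (Vv ξ n k))) := by rw [hmap]
    _ = ∫⁻ u, ∫⁻ v, H u v ∂(μ.map (Vv ξ n k)) ∂(μ.map (Vv ξ 0 n)) :=
        lintegral_prod _ hH.aemeasurable
    _ = ∫⁻ u, ∫⁻ v, H u v ∂(μ.map (Vv ξ 0 k)) ∂(μ.map (Vv ξ 0 n)) := by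
        rw [map_Vv_pi hmeas hindep hident n k, ← map_Vv_pi hmeas hindep hident 0 k]

/-! ### more congruence and tuple measurability for `Ap`, `Cp`, `Fp` -/

lemma Ap_congr {u v : ℕ → ℝ} {c : ℝ} {m n : ℕ} (h : ∀ i < n, u i = v i) :
    Ap c m n u ↔ Ap c m n v := by
  unfold Ap
  rw [isRec_congr h (le_refl n), cnt_congr h (le_refl n), psum_congr h n (le_refl n)]
  have hj : ∀ j, j < n → ((isRec u j → psum u j < c) ↔ (isRec v j → psum v j < c)) := by
    intro j hj
    rw [isRec_congr h (by omega : j ≤ n), psum_congr h j (by omega)]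
  constructor
  · rintro ⟨h1, h2, h3, h4⟩
    exact ⟨h1, h2, h3, fun j hjn => (hj j hjn).mp (h4 j hjn)⟩
  · rintro ⟨h1, h2, h3, h4⟩
    exact ⟨h1, h2, h3, fun j hjn => (hj j hjn).mpr (h4 j hjn)⟩

lemma Cp_congr {u v : ℕ → ℝ} {c : ℝ} {m n : ℕ} (h : ∀ i < n, u i = v i) :
    Cp c m n u ↔ Cp c m n v := by
  rw [Cp_iff_ApBp, Cp_iff_ApBp, Ap_congr h, Bp_congr h]

lemma Fp_congr {u v : ℕ → ℝ} {c : ℝ} {n : ℕ} (h : ∀ i < n, u i = v i) :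
    Fp c n u ↔ Fp c n v := by
  unfold Fp
  rw [psum_congr h n (le_refl n)]
  have hj : ∀ j, j < n → (psum u j < c ↔ psum v j < c) := by
    intro j hj; rw [psum_congr h j (by omega)]
  constructor
  · rintro ⟨h1, h2⟩
    exact ⟨h1, fun j hjn => (hj j hjn).mp (h2 j hjn)⟩
  · rintro ⟨h1, h2⟩
    exact ⟨h1, fun j hjn => (hj j hjn).mpr (h2 j hjn)⟩

lemma measurableSet_Ap_ext {k : ℕ} (c : ℝ) (m n : ℕ) :
    MeasurableSet {v : Fin k → ℝ | Ap c m n (ext v)} := by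
  have : {v : Fin k → ℝ | Ap c m n (ext v)}
      = ({v : Fin k → ℝ | isRec (ext v) n} ∩ ((fun v : Fin k → ℝ => cnt (ext v) n) ⁻¹' {m})
        ∩ {v : Fin k → ℝ | c ≤ psum (ext v) n})
        ∩ ⋂ j ∈ Set.Iio n, ({v : Fin k → ℝ | isRec (ext v) j}ᶜ ∪ {v | psum (ext v) j < c}) := by
    ext v
    simp only [Ap, Set.mem_setOf_eq, Set.mem_inter_iff, Set.mem_preimage, Set.mem_singleton_iff,
      Set.mem_iInter, Set.mem_Iio, Set.mem_union, Set.mem_compl_iff]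
    constructor
    · rintro ⟨h1, h2, h3, h4⟩
      exact ⟨⟨⟨h1, h2⟩, h3⟩, fun j hj => by by_cases hr : isRec (ext v) j; exact Or.inr (h4 j hj hr); exact Or.inl hr⟩
    · rintro ⟨⟨⟨h1, h2⟩, h3⟩, h4⟩
      refine ⟨h1, h2, h3, fun j hj hr => ?_⟩
      rcases h4 j hj with h | h
      · exact absurd hr h
      · exact h
  rw [this]
  refine MeasurableSet.inter (((measurableSet_isRec_ext n).inter
    ((measurable_cnt_ext n) (measurableSet_singleton m))).inter
    (measurableSet_le measurable_const (measurable_psum_ext n))) ?_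
  exact MeasurableSet.biInter (Set.to_countable _) (fun j _ =>
    ((measurableSet_isRec_ext j).compl).union (measurableSet_lt (measurable_psum_ext j) measurable_const))

lemma measurableSet_Cp_ext {k : ℕ} (c : ℝ) (m n : ℕ) :
    MeasurableSet {v : Fin k → ℝ | Cp c m n (ext v)} := by
  have : {v : Fin k → ℝ | Cp c m n (ext v)}
      = {v : Fin k → ℝ | Ap c m n (ext v)} ∪ {v : Fin k → ℝ | Bp c m n (ext v)} := by
    ext v; simp only [Set.mem_setOf_eq, Set.mem_union]; exact Cp_iff_ApBp
  rw [this]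
  exact (measurableSet_Ap_ext c m n).union (measurableSet_Bp_ext c m n)

lemma measurableSet_Fp_ext {k : ℕ} (c : ℝ) (n : ℕ) :
    MeasurableSet {v : Fin k → ℝ | Fp c n (ext v)} := by
  have : {v : Fin k → ℝ | Fp c n (ext v)}
      = {v : Fin k → ℝ | c ≤ psum (ext v) n}
        ∩ ⋂ j ∈ Set.Iio n, {v : Fin k → ℝ | psum (ext v) j < c} := by
    ext v; simp [Fp, Set.mem_setOf_eq]
  rw [this]
  exact (measurableSet_le measurable_const (measurable_psum_ext n)).inter
    (MeasurableSet.biInter (Set.to_countable _)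
      (fun j _ => measurableSet_lt (measurable_psum_ext j) measurable_const))

/-! ### events on `Ω` -/

def Bev (ξ : ℕ → Ω → ℝ) (c : ℝ) (m n : ℕ) : Set Ω := {ω | Bp c m n (inc ξ ω)}
def Aev (ξ : ℕ → Ω → ℝ) (c : ℝ) (m n : ℕ) : Set Ω := {ω | Ap c m n (inc ξ ω)}
def Cev (ξ : ℕ → Ω → ℝ) (c : ℝ) (m n : ℕ) : Set Ω := {ω | Cp c m n (inc ξ ω)}
def Fev (ξ : ℕ → Ω → ℝ) (c : ℝ) (n : ℕ) : Set Ω := {ω | Fp c n (inc ξ ω)}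
def Eev (ξ : ℕ → Ω → ℝ) (l : ℕ) : Set Ω := {ω | Ep l (inc ξ ω)}

lemma Bev_eq (ξ : ℕ → Ω → ℝ) (c : ℝ) (m n : ℕ) :
    Bev ξ c m n = Vv ξ 0 n ⁻¹' {v | Bp c m n (ext v)} :=
  Set.ext fun ω => (Bp_congr (fun i hi => (ext_Vv0 i hi).symm))

lemma Aev_eq (ξ : ℕ → Ω → ℝ) (c : ℝ) (m n : ℕ) :
    Aev ξ c m n = Vv ξ 0 n ⁻¹' {v | Ap c m n (ext v)} :=
  Set.ext fun ω => (Ap_congr (fun i hi => (ext_Vv0 i hi).symm))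

lemma Cev_eq (ξ : ℕ → Ω → ℝ) (c : ℝ) (m n : ℕ) :
    Cev ξ c m n = Vv ξ 0 n ⁻¹' {v | Cp c m n (ext v)} :=
  Set.ext fun ω => (Cp_congr (fun i hi => (ext_Vv0 i hi).symm))

lemma Fev_eq (ξ : ℕ → Ω → ℝ) (c : ℝ) (n : ℕ) :
    Fev ξ c n = Vv ξ 0 n ⁻¹' {v | Fp c n (ext v)} :=
  Set.ext fun ω => (Fp_congr (fun i hi => (ext_Vv0 i hi).symm))

lemma Eev_eq (ξ : ℕ → Ω → ℝ) (l : ℕ) :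
    Eev ξ l = Vv ξ 0 l ⁻¹' {v | Ep l (ext v)} :=
  Set.ext fun ω => (Ep_congr (fun i hi => (ext_Vv0 i hi).symm))

section Events

variable {ξ : ℕ → Ω → ℝ} (hmeas : ∀ i, Measurable (ξ i))

include hmeas

lemma measurableSet_Bev (c : ℝ) (m n : ℕ) : MeasurableSet (Bev ξ c m n) := by
  rw [Bev_eq]; exact (measurable_Vv hmeas 0 n) (measurableSet_Bp_ext c m n)

lemma measurableSet_Aev (c : ℝ) (m n : ℕ) : MeasurableSet (Aev ξ c m n) := by
  rw [Aev_eq]; exact (measurable_Vv hmeas 0 n) (measurableSet_Ap_ext c m n)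

lemma measurableSet_Cev (c : ℝ) (m n : ℕ) : MeasurableSet (Cev ξ c m n) := by
  rw [Cev_eq]; exact (measurable_Vv hmeas 0 n) (measurableSet_Cp_ext c m n)

lemma measurableSet_Fev (c : ℝ) (n : ℕ) : MeasurableSet (Fev ξ c n) := by
  rw [Fev_eq]; exact (measurable_Vv hmeas 0 n) (measurableSet_Fp_ext c n)

lemma measurableSet_Eev (l : ℕ) : MeasurableSet (Eev ξ l) := by
  rw [Eev_eq]; exact (measurable_Vv hmeas 0 l) (measurableSet_Ep_ext l)

end Events

/-! ### integrands -/

/-- tuple-space version of the integrand. -/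
noncomputable def fT (q : ℝ) (g : ℝ → ℝ) (w : ℝ) (n : ℕ) (v : Fin n → ℝ) : ℝ≥0∞ :=
  ENNReal.ofReal (Real.exp (-q * n) * g (w + psum (ext v) n))

/-- the integrand `e^{-qn} g(w + S_n)`. -/
noncomputable def fI (ξ : ℕ → Ω → ℝ) (q : ℝ) (g : ℝ → ℝ) (w : ℝ) (n : ℕ) (ω : Ω) : ℝ≥0∞ :=
  ENNReal.ofReal (Real.exp (-q * n) * g (w + psum (inc ξ ω) n))

lemma psum_inc_eq (ξ : ℕ → Ω → ℝ) (n : ℕ) (ω : Ω) :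
    psum (ext (Vv ξ 0 n ω)) n = psum (inc ξ ω) n :=
  psum_congr (fun i hi => ext_Vv0 i hi) n (le_refl n)

lemma fI_eq_comp (ξ : ℕ → Ω → ℝ) (q : ℝ) (g : ℝ → ℝ) (w : ℝ) (n : ℕ) :
    fI ξ q g w n = fT q g w n ∘ Vv ξ 0 n := by
  funext ω
  simp only [fI, fT, Function.comp_apply, psum_inc_eq]

lemma measurable_fT {g : ℝ → ℝ} (hg : Measurable g) (q w : ℝ) (n : ℕ) :
    Measurable (fT q g w n) := by
  apply Measurable.ennreal_ofReal
  exact measurable_const.mul (hg.comp (measurable_const.add (measurable_psum_ext n)))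

lemma measurable_fI {ξ : ℕ → Ω → ℝ} (hmeas : ∀ i, Measurable (ξ i)) {g : ℝ → ℝ}
    (hg : Measurable g) (q w : ℝ) (n : ℕ) : Measurable (fI ξ q g w n) := by
  rw [fI_eq_comp]
  exact (measurable_fT hg q w n).comp (measurable_Vv hmeas 0 n)

/-! ### hitting times -/

lemma iInf_coe_eq_find {P : ℕ → Prop} (h : ∃ n, P n) [DecidablePred P] :
    ⨅ n ∈ {n : ℕ | P n}, (n : ℕ∞) = (Nat.find h : ℕ∞) := by
  apply le_antisymm
  · exact iInf₂_le (Nat.find h) (Nat.find_spec h)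
  · refine le_iInf₂ (fun n hn => ?_)
    exact_mod_cast Nat.find_le hn

lemma iInf_coe_eq_top {P : ℕ → Prop} (h : ∀ n, ¬ P n) :
    ⨅ n ∈ {n : ℕ | P n}, (n : ℕ∞) = ⊤ := by
  simp only [iInf_eq_top, Set.mem_setOf_eq]
  intro n hn
  exact absurd hn (h n)

lemma payoff_pointwise (q : ℝ) (g : ℝ → ℝ) (X : ℕ → Ω → ℝ) (τ : Ω → ℕ∞) (ω : Ω) :
    payoff q g X τ ω
      = ∑' n : ℕ, Set.indicator {ω' | τ ω' = (n : ℕ∞)}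
          (fun ω' => ENNReal.ofReal (Real.exp (-q * n) * g (X n ω'))) ω := by
  by_cases h : τ ω = ⊤
  · rw [payoff, if_pos h]
    symm
    rw [ENNReal.tsum_eq_zero]
    intro n
    apply Set.indicator_of_notMem
    simp only [Set.mem_setOf_eq, h]
    exact fun hc => (ENat.coe_ne_top n) hc.symm
  · obtain ⟨n₀, hn₀⟩ : ∃ n₀ : ℕ, (n₀ : ℕ∞) = τ ω := by
      obtain ⟨a, ha⟩ := WithTop.ne_top_iff_exists.1 h
      exact ⟨a, by exact_mod_cast ha⟩
    rw [payoff, if_neg h]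
    rw [tsum_eq_single n₀ ?_]
    · rw [Set.indicator_of_mem (by simp only [Set.mem_setOf_eq]; exact hn₀.symm)]
      rw [← hn₀]
      simp
    · intro n hn
      apply Set.indicator_of_notMem
      simp only [Set.mem_setOf_eq, ← hn₀]
      intro hc
      exact hn (Nat.cast_injective hc).symm

lemma lintegral_payoff {μ : Measure Ω} (q : ℝ) (g : ℝ → ℝ) (X : ℕ → Ω → ℝ) (τ : Ω → ℕ∞)
    (hXg : ∀ n : ℕ, Measurable (fun ω => ENNReal.ofReal (Real.exp (-q * n) * g (X n ω))))
    (hτ : ∀ n : ℕ, MeasurableSet {ω | τ ω = (n : ℕ∞)}) :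
    ∫⁻ ω, payoff q g X τ ω ∂μ
      = ∑' n : ℕ, ∫⁻ ω, Set.indicator {ω' | τ ω' = (n : ℕ∞)}
          (fun ω' => ENNReal.ofReal (Real.exp (-q * n) * g (X n ω'))) ω ∂μ := by
  have : ∀ ω, payoff q g X τ ω = ∑' n : ℕ, Set.indicator {ω' | τ ω' = (n : ℕ∞)}
      (fun ω' => ENNReal.ofReal (Real.exp (-q * n) * g (X n ω'))) ω :=
    payoff_pointwise q g X τ
  simp_rw [this]
  exact lintegral_tsum (fun n => ((hXg n).indicator (hτ n)).aemeasurable)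

lemma hit0_eq_iff (X : ℕ → Ω → ℝ) (v : ℝ) (ω : Ω) (n : ℕ) :
    hitFrom0 X v ω = (n : ℕ∞) ↔ (v ≤ X n ω ∧ ∀ j < n, ¬ v ≤ X j ω) := by
  classical
  by_cases h : ∃ k, v ≤ X k ω
  · rw [hitFrom0, iInf_coe_eq_find h, Nat.cast_inj]
    exact Nat.find_eq_iff h
  · push_neg at h
    rw [hitFrom0, iInf_coe_eq_top (fun k => not_le.2 (h k))]
    constructor
    · intro hc; exact absurd hc.symm (ENat.coe_ne_top n)
    · intro hc; exact absurd hc.1 (not_le.2 (h n))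

lemma hit1_eq_iff (X : ℕ → Ω → ℝ) (v : ℝ) (ω : Ω) (n : ℕ) :
    hitFrom1 X v ω = (n : ℕ∞)
      ↔ ((1 ≤ n ∧ v ≤ X n ω) ∧ ∀ j < n, ¬ (1 ≤ j ∧ v ≤ X j ω)) := by
  classical
  by_cases h : ∃ k, 1 ≤ k ∧ v ≤ X k ω
  · rw [hitFrom1, iInf_coe_eq_find h, Nat.cast_inj]
    exact Nat.find_eq_iff h
  · push_neg at h
    rw [hitFrom1, iInf_coe_eq_top (fun k hk => (not_le.2 (h k hk.1)) hk.2)]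
    constructor
    · intro hc; exact absurd hc.symm (ENat.coe_ne_top n)
    · intro hc; exact absurd hc.1.2 (not_le.2 (h n hc.1.1))

lemma walk_eq_psum (x : ℝ) (ξ : ℕ → Ω → ℝ) (n : ℕ) (ω : Ω) :
    walk x ξ n ω = x + psum (inc ξ ω) n := rfl

lemma hit0_event (ξ : ℕ → Ω → ℝ) (x y : ℝ) (n : ℕ) :
    {ω | hitFrom0 (walk x ξ) y ω = (n : ℕ∞)} = Fev ξ (y - x) n := by
  ext ω
  simp only [Set.mem_setOf_eq, hit0_eq_iff, Fev, Fp, walk_eq_psum]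
  constructor
  · rintro ⟨h1, h2⟩
    exact ⟨by linarith, fun j hj => by have := h2 j hj; push_neg at this; linarith⟩
  · rintro ⟨h1, h2⟩
    exact ⟨by linarith, fun j hj => by have := h2 j hj; push_neg; linarith⟩

lemma hit1_event (ξ : ℕ → Ω → ℝ) (y : ℝ) (n : ℕ) :
    {ω | hitFrom1 (walk y ξ) y ω = (n : ℕ∞)} = Eev ξ n := by
  ext ω
  simp only [Set.mem_setOf_eq, hit1_eq_iff, Eev, Ep, walk_eq_psum]
  constructor
  · rintro ⟨⟨h0, h1⟩, h2⟩
    refine ⟨h0, by linarith, fun j hj1 hj2 => ?_⟩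
    have := h2 j hj2; push_neg at this
    have := this hj1; linarith
  · rintro ⟨h0, h1, h2⟩
    refine ⟨⟨h0, by linarith⟩, fun j hj => ?_⟩
    push_neg
    intro hj1
    have := h2 j hj1 hj
    linarith

/-- `Φ w = E[e^{-q T₁} g(w + S_{T₁}); T₁ < ∞]`. -/
noncomputable def Phi (μ : Measure Ω) (ξ : ℕ → Ω → ℝ) (q : ℝ) (g : ℝ → ℝ) (w : ℝ) : ℝ≥0∞ :=
  ∑' l : ℕ, ∫⁻ ω, (Eev ξ l).indicator (fI ξ q g w l) ω ∂μ

lemma measurable_psum_inc {ξ : ℕ → Ω → ℝ} (hmeas : ∀ i, Measurable (ξ i)) (n : ℕ) :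
    Measurable (fun ω => psum (inc ξ ω) n) := by
  have : (fun ω => psum (inc ξ ω) n) = (fun v : Fin n → ℝ => psum (ext v) n) ∘ Vv ξ 0 n :=
    funext fun ω => (psum_inc_eq ξ n ω).symm
  rw [this]
  exact (measurable_psum_ext n).comp (measurable_Vv hmeas 0 n)

lemma lintegral_payoff1 {μ : Measure Ω} {ξ : ℕ → Ω → ℝ} (hmeas : ∀ i, Measurable (ξ i))
    {g : ℝ → ℝ} (hg : Measurable g) (q y : ℝ) :
    ∫⁻ ω, payoff q g (walk y ξ) (hitFrom1 (walk y ξ) y) ω ∂μ = Phi μ ξ q g y := by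
  rw [lintegral_payoff q g (walk y ξ) (hitFrom1 (walk y ξ) y)
      (fun n => Measurable.ennreal_ofReal (measurable_const.mul
        (hg.comp (measurable_const.add (measurable_psum_inc hmeas n)))))
      (fun n => by rw [hit1_event]; exact measurableSet_Eev hmeas n)]
  unfold Phi
  congr 1
  funext l
  congr 1
  rw [hit1_event]
  rfl

lemma lintegral_payoff0 {μ : Measure Ω} {ξ : ℕ → Ω → ℝ} (hmeas : ∀ i, Measurable (ξ i))
    {g : ℝ → ℝ} (hg : Measurable g) (q x y : ℝ) :
    ∫⁻ ω, payoff q g (walk x ξ) (hitFrom0 (walk x ξ) y) ω ∂μ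
      = ∑' n : ℕ, ∫⁻ ω, (Fev ξ (y - x) n).indicator (fI ξ q g x n) ω ∂μ := by
  rw [lintegral_payoff q g (walk x ξ) (hitFrom0 (walk x ξ) y)
      (fun n => Measurable.ennreal_ofReal (measurable_const.mul
        (hg.comp (measurable_const.add (measurable_psum_inc hmeas n)))))
      (fun n => by rw [hit0_event]; exact measurableSet_Fev hmeas _ n)]
  congr 1
  funext n
  congr 1
  rw [hit0_event]
  rfl

/-! ### the log-concavity ratio inequality -/

lemma ratio {g : ℝ → ℝ} (hg0 : ∀ x, 0 ≤ g x) (hgmono : Monotone g)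
    (hglc : ∀ a b θ : ℝ, 0 < θ → θ < 1 →
      g a ^ θ * g b ^ (1 - θ) ≤ g (θ * a + (1 - θ) * b))
    {w y : ℝ} (hwy : w ≤ y) {h : ℝ} (hh : 0 ≤ h) (hgy : 0 < g y) :
    g (y + h) * g w ≤ g (w + h) * g y := by
  rcases eq_or_lt_of_le hwy with he | hwy'
  · rw [← he]
  rcases eq_or_lt_of_le hh with he | hh'
  · rw [← he, add_zero, add_zero, mul_comm]
  rcases (hg0 w).eq_or_lt with hgw | hgw
  · rw [← hgw, mul_zero]
    exact mul_nonneg (hg0 _) (hg0 _)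
  · -- main case: apply log-concavity with θ = (y - w)/(y - w + h)
    set d : ℝ := y - w with hd
    set s : ℝ := d + h with hs
    have hd0 : 0 < d := by simp [hd]; linarith
    have hs0 : 0 < s := by simp [hs]; linarith
    set θ : ℝ := d / s with hθ
    have hθ0 : 0 < θ := div_pos hd0 hs0
    have hθ1 : θ < 1 := (div_lt_one hs0).2 (by simp [hs]; linarith)
    have e1 : θ * w + (1 - θ) * (y + h) = w + h := by
      have hθs : θ * s = d := div_mul_cancel₀ d hs0.ne'
      have h' : θ * w + (1 - θ) * (y + h) - (w + h) = -(θ * s - d) := by rw [hs, hd]; ring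
      linarith
    have e2 : θ * (y + h) + (1 - θ) * w = y := by
      have hθs : θ * s = d := div_mul_cancel₀ d hs0.ne'
      have h' : θ * (y + h) + (1 - θ) * w - y = θ * s - d := by rw [hs, hd]; ring
      linarith
    have hA := hglc w (y + h) θ hθ0 hθ1
    have hB := hglc (y + h) w θ hθ0 hθ1
    rw [e1] at hA
    rw [e2] at hB
    have hgyh : 0 < g (y + h) := lt_of_lt_of_le hgy (hgmono (by linarith))
    have hkey : g w * g (y + h) ≤ g (w + h) * g y := by
      have hm := mul_le_mul hA hB
        (mul_nonneg (Real.rpow_nonneg (hg0 _) _) (Real.rpow_nonneg (hg0 _) _)) (hg0 _)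
      have ew : g w ^ θ * g w ^ (1 - θ) = g w := by
        rw [← Real.rpow_add hgw]; norm_num
      have eyh : g (y + h) ^ θ * g (y + h) ^ (1 - θ) = g (y + h) := by
        rw [← Real.rpow_add hgyh]; norm_num
      calc g w * g (y + h) = (g w ^ θ * g w ^ (1 - θ)) * (g (y + h) ^ θ * g (y + h) ^ (1 - θ)) := by
            rw [ew, eyh]
        _ = (g w ^ θ * g (y + h) ^ (1 - θ)) * (g (y + h) ^ θ * g w ^ (1 - θ)) := by ring
        _ ≤ g (w + h) * g y := hm
    linarith [hkey]

/-! ### `Φ w ≥ g w` below the level -/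

lemma Phi_ge {μ : Measure Ω} [IsProbabilityMeasure μ] {ξ : ℕ → Ω → ℝ}
    (hmeas : ∀ i, Measurable (ξ i)) {g : ℝ → ℝ} (hg : Measurable g)
    (hg0 : ∀ x, 0 ≤ g x) (hgmono : Monotone g)
    (hglc : ∀ a b θ : ℝ, 0 < θ → θ < 1 →
      g a ^ θ * g b ^ (1 - θ) ≤ g (θ * a + (1 - θ) * b))
    {q y : ℝ} (hgy : 0 < g y)
    (hres : ENNReal.ofReal (g y) ≤ Phi μ ξ q g y) :
    ∀ w ≤ y, ENNReal.ofReal (g w) ≤ Phi μ ξ q g w := by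
  intro w hwy
  have key : Phi μ ξ q g y * ENNReal.ofReal (g w) ≤ Phi μ ξ q g w * ENNReal.ofReal (g y) := by
    unfold Phi
    rw [← ENNReal.tsum_mul_right, ← ENNReal.tsum_mul_right]
    refine ENNReal.tsum_le_tsum (fun l => ?_)
    rw [← lintegral_mul_const _ (((measurable_fI hmeas hg q y l).indicator (measurableSet_Eev hmeas l))),
        ← lintegral_mul_const _ (((measurable_fI hmeas hg q w l).indicator (measurableSet_Eev hmeas l)))]
    refine lintegral_mono (fun ω => ?_)
    by_cases hmem : ω ∈ Eev ξ l
    · rw [Set.indicator_of_mem hmem, Set.indicator_of_mem hmem]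
      obtain ⟨-, hp, -⟩ := hmem
      unfold fI
      rw [← ENNReal.ofReal_mul (mul_nonneg (le_of_lt (Real.exp_pos _)) (hg0 _)), ← ENNReal.ofReal_mul (mul_nonneg (le_of_lt (Real.exp_pos _)) (hg0 _))]
      apply ENNReal.ofReal_le_ofReal
      have hr := ratio hg0 hgmono hglc hwy hp hgy
      calc Real.exp (-q * l) * g (y + psum (inc ξ ω) l) * g w
          = Real.exp (-q * l) * (g (y + psum (inc ξ ω) l) * g w) := by ring
        _ ≤ Real.exp (-q * l) * (g (w + psum (inc ξ ω) l) * g y) :=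
            mul_le_mul_of_nonneg_left hr (le_of_lt (Real.exp_pos _))
        _ = Real.exp (-q * l) * g (w + psum (inc ξ ω) l) * g y := by ring
    · rw [Set.indicator_of_notMem hmem, Set.indicator_of_notMem hmem, zero_mul, zero_mul]
  have h2 : ENNReal.ofReal (g w) * ENNReal.ofReal (g y)
      ≤ Phi μ ξ q g w * ENNReal.ofReal (g y) := by
    calc ENNReal.ofReal (g w) * ENNReal.ofReal (g y)
        = ENNReal.ofReal (g y) * ENNReal.ofReal (g w) := mul_comm _ _
      _ ≤ Phi μ ξ q g y * ENNReal.ofReal (g w) :=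
          mul_le_mul_left hres _
      _ ≤ Phi μ ξ q g w * ENNReal.ofReal (g y) := key
  exact (ENNReal.mul_le_mul_iff_left (by simp [ENNReal.ofReal_pos.2 hgy, ne_of_gt]) ENNReal.ofReal_ne_top).1 h2

/-! ### the main quantities -/

def Dev (ξ : ℕ → Ω → ℝ) (n l : ℕ) : Set Ω := Vv ξ n l ⁻¹' {v | Ep l (ext v)}

lemma Dev_mem {ξ : ℕ → Ω → ℝ} {n l : ℕ} {ω : Ω} :
    ω ∈ Dev ξ n l ↔ Ep l (shiftSeq (inc ξ ω) n) :=
  Ep_congr (fun i hi => ext_Vv i hi)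

noncomputable def bQ (μ : Measure Ω) (ξ : ℕ → Ω → ℝ) (q : ℝ) (g : ℝ → ℝ) (x c : ℝ) (m : ℕ) :
    ℝ≥0∞ := ∑' n : ℕ, ∫⁻ ω, (Bev ξ c m n).indicator (fI ξ q g x n) ω ∂μ

noncomputable def aQ (μ : Measure Ω) (ξ : ℕ → Ω → ℝ) (q : ℝ) (g : ℝ → ℝ) (x c : ℝ) (m : ℕ) :
    ℝ≥0∞ := ∑' n : ℕ, ∫⁻ ω, (Aev ξ c m n).indicator (fI ξ q g x n) ω ∂μ

noncomputable def cQ (μ : Measure Ω) (ξ : ℕ → Ω → ℝ) (q : ℝ) (g : ℝ → ℝ) (x c : ℝ) (m : ℕ) :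
    ℝ≥0∞ := ∑' n : ℕ, ∫⁻ ω, (Cev ξ c m n).indicator (fI ξ q g x n) ω ∂μ

/-! ### the ladder-step inequality -/

lemma step_ineq {μ : Measure Ω} [IsProbabilityMeasure μ] {ξ : ℕ → Ω → ℝ}
    (hmeas : ∀ i, Measurable (ξ i))
    (hindep : iIndepFun ξ μ)
    (hident : ∀ i, μ.map (ξ i) = μ.map (ξ 1))
    {g : ℝ → ℝ} (hg : Measurable g) (hg0 : ∀ x, 0 ≤ g x) (hgmono : Monotone g)
    (hglc : ∀ a b θ : ℝ, 0 < θ → θ < 1 →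
      g a ^ θ * g b ^ (1 - θ) ≤ g (θ * a + (1 - θ) * b))
    {q x y : ℝ} (hxy : x < y) (hgy : 0 < g y)
    (hres : ENNReal.ofReal (g y) ≤ Phi μ ξ q g y) (m : ℕ) :
    bQ μ ξ q g x (y - x) m ≤ cQ μ ξ q g x (y - x) (m + 1) := by
  classical
  set c : ℝ := y - x with hc
  -- the single-excursion value functions
  set φ : ℕ → ℝ → ℝ≥0∞ :=
    fun l w => ∫⁻ ω, (Eev ξ l).indicator (fI ξ q g w l) ω ∂μ with hφ
  have hφmeas : ∀ l, Measurable (fun w => φ l w) := by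
    intro l
    have hF : Measurable (fun p : ℝ × Ω => (Eev ξ l).indicator (fI ξ q g p.1 l) p.2) := by
      have hFeq : (fun p : ℝ × Ω => (Eev ξ l).indicator (fI ξ q g p.1 l) p.2)
          = (Prod.snd ⁻¹' (Eev ξ l)).indicator
              (fun p : ℝ × Ω =>
                ENNReal.ofReal (Real.exp (-q * l) * g (p.1 + psum (inc ξ p.2) l))) := by
        funext p
        by_cases hp : p.2 ∈ Eev ξ l
        · rw [Set.indicator_of_mem hp, Set.indicator_of_mem (by exact hp)]
          rfl
        · rw [Set.indicator_of_notMem hp, Set.indicator_of_notMem (by exact hp)]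
      rw [hFeq]
      exact Measurable.indicator (Measurable.ennreal_ofReal (measurable_const.mul
        (hg.comp (measurable_fst.add ((measurable_psum_inc hmeas l).comp measurable_snd)))))
        (measurable_snd (measurableSet_Eev hmeas l))
    exact hF.lintegral_prod_right'
  have hPhi_ge := Phi_ge hmeas hg hg0 hgmono hglc hgy hres
  have hPhi_succ : ∀ w, (∑' l : ℕ, φ (l + 1) w) = Phi μ ξ q g w := by
    intro w
    have h0 : φ 0 w = 0 := by
      have hE0 : Eev ξ 0 = (∅ : Set Ω) := by
        ext ω; simp [Eev, Ep]
      simp [hφ, hE0]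
    have hsupp : (Function.support fun l => φ l w) ⊆ Set.range (fun l : ℕ => l + 1) := by
      intro j hj
      rcases Nat.eq_zero_or_pos j with hh | hh
      · exact absurd (hh ▸ hj) (by simp [h0])
      · exact ⟨j - 1, by show j - 1 + 1 = j; omega⟩
    have := Function.Injective.tsum_eq (f := fun l => φ l w)
      (fun a b hab => by have : a + 1 = b + 1 := hab; omega) hsupp
    exact this
  -- the (n, l) term of the ladder decomposition
  set J : ℕ → ℕ → ℝ≥0∞ := fun n l =>
    ∫⁻ ω, ((Bev ξ c m n) ∩ (Dev ξ n l)).indicator (fI ξ q g x (n + l)) ω ∂μ with hJ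
  -- evaluate J by splitting past and future
  have hJ_eq : ∀ n l, J n l
      = ∫⁻ u, (if Bp c m n (ext u)
          then ENNReal.ofReal (Real.exp (-q * n)) * φ l (x + psum (ext u) n) else 0)
          ∂(μ.map (Vv ξ 0 n)) := by
    intro n l
    set H : (Fin n → ℝ) → (Fin l → ℝ) → ℝ≥0∞ := fun u v =>
      if Bp c m n (ext u) ∧ Ep l (ext v)
      then ENNReal.ofReal (Real.exp (-q * ((n + l : ℕ) : ℝ))
            * g (x + psum (ext u) n + psum (ext v) l))
      else 0 with hH
    have hHmeas : Measurable (Function.uncurry H) := by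
      have huncurry : Function.uncurry H = fun p : (Fin n → ℝ) × (Fin l → ℝ) =>
          if Bp c m n (ext p.1) ∧ Ep l (ext p.2)
          then ENNReal.ofReal (Real.exp (-q * ((n + l : ℕ) : ℝ))
                * g (x + psum (ext p.1) n + psum (ext p.2) l))
          else 0 := rfl
      rw [huncurry]
      apply Measurable.ite
      · exact (measurable_fst (measurableSet_Bp_ext c m n)).inter
          (measurable_snd (measurableSet_Ep_ext l))
      · apply Measurable.ennreal_ofReal
        apply measurable_const.mul
        apply hg.comp
        exact (measurable_const.add ((measurable_psum_ext n).comp measurable_fst)).add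
          ((measurable_psum_ext l).comp measurable_snd)
      · exact measurable_const
    have hpoint : (fun ω => ((Bev ξ c m n) ∩ (Dev ξ n l)).indicator (fI ξ q g x (n + l)) ω)
        = fun ω => H (Vv ξ 0 n ω) (Vv ξ n l ω) := by
      funext ω
      simp only [hH]
      by_cases hmem : ω ∈ (Bev ξ c m n) ∩ (Dev ξ n l)
      · obtain ⟨hB, hD⟩ := hmem
        have hB' : Bp c m n (ext (Vv ξ 0 n ω)) :=
          (Bp_congr (fun i hi => (ext_Vv0 i hi).symm)).1 hB
        have hD' : Ep l (ext (Vv ξ n l ω)) := hD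
        rw [Set.indicator_of_mem (show ω ∈ (Bev ξ c m n) ∩ (Dev ξ n l) from ⟨hB, hD⟩),
          if_pos (show Bp c m n (ext (Vv ξ 0 n ω)) ∧ Ep l (ext (Vv ξ n l ω)) from ⟨hB', hD'⟩)]
        unfold fI
        have e1 : psum (ext (Vv ξ 0 n ω)) n = psum (inc ξ ω) n := psum_inc_eq ξ n ω
        have e2 : psum (ext (Vv ξ n l ω)) l = psum (shiftSeq (inc ξ ω) n) l :=
          psum_congr (fun i hi => ext_Vv i hi) l (le_refl l)
        rw [e1, e2, psum_shiftSeq]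
        have e3 : x + psum (inc ξ ω) n + (psum (inc ξ ω) (n + l) - psum (inc ξ ω) n)
            = x + psum (inc ξ ω) (n + l) := by ring
        rw [e3]
      · rw [Set.indicator_of_notMem hmem, if_neg ?_]
        rintro ⟨hB', hD'⟩
        exact hmem ⟨(Bp_congr (fun i hi => (ext_Vv0 i hi).symm)).2 hB', hD'⟩
    simp only [hJ]
    rw [hpoint, lintegral_split hmeas hindep hident n l H hHmeas]
    refine lintegral_congr (fun u => ?_)
    by_cases hB : Bp c m n (ext u)
    · rw [if_pos hB]
      have hHu : ∀ v, H u v = ENNReal.ofReal (Real.exp (-q * n))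
          * Set.indicator {v' : Fin l → ℝ | Ep l (ext v')}
            (fun v' => ENNReal.ofReal (Real.exp (-q * l)
              * g ((x + psum (ext u) n) + psum (ext v') l))) v := by
        intro v
        simp only [hH]
        by_cases hE : Ep l (ext v)
        · rw [if_pos (show Bp c m n (ext u) ∧ Ep l (ext v) from ⟨hB, hE⟩),
            Set.indicator_of_mem (show v ∈ {v' : Fin l → ℝ | Ep l (ext v')} from hE),
            ← ENNReal.ofReal_mul (le_of_lt (Real.exp_pos _))]
          congr 1
          have eexp : (-q * ((n + l : ℕ) : ℝ)) = (-q * n) + (-q * l) := by push_cast; ring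
          rw [eexp, Real.exp_add]
          ring
        · rw [if_neg (fun hcon => hE hcon.2), Set.indicator_of_notMem
            (show v ∉ {v' : Fin l → ℝ | Ep l (ext v')} from hE), mul_zero]
      simp_rw [hHu]
      have hindmeas : Measurable (fun v' : Fin l → ℝ =>
          Set.indicator {v'' : Fin l → ℝ | Ep l (ext v'')}
            (fun v'' => ENNReal.ofReal (Real.exp (-q * l)
              * g ((x + psum (ext u) n) + psum (ext v'') l))) v') :=
        (Measurable.ennreal_ofReal (measurable_const.mul
          (hg.comp (measurable_const.add (measurable_psum_ext l))))).indicator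
          (measurableSet_Ep_ext l)
      rw [lintegral_const_mul _ hindmeas]
      congr 1
      rw [lintegral_map_Vv hmeas 0 l (fun v' : Fin l → ℝ =>
          Set.indicator {v'' : Fin l → ℝ | Ep l (ext v'')}
            (fun v'' => ENNReal.ofReal (Real.exp (-q * l)
              * g ((x + psum (ext u) n) + psum (ext v'') l))) v') hindmeas]
      refine lintegral_congr (fun ω => ?_)
      by_cases hE : Ep l (ext (Vv ξ 0 l ω))
      · have hEev : ω ∈ Eev ξ l := (Ep_congr (fun i hi => ext_Vv0 i hi)).1 hE
        rw [Set.indicator_of_mem (show (Vv ξ 0 l ω) ∈ {v' : Fin l → ℝ | Ep l (ext v')} from hE),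
          Set.indicator_of_mem hEev]
        unfold fI
        rw [psum_inc_eq]
      · have hEev : ω ∉ Eev ξ l := fun hcon =>
          hE ((Ep_congr (fun i hi => (ext_Vv0 i hi).symm)).1 hcon)
        rw [Set.indicator_of_notMem
          (show (Vv ξ 0 l ω) ∉ {v' : Fin l → ℝ | Ep l (ext v')} from hE),
          Set.indicator_of_notMem hEev]
    · rw [if_neg hB]
      have hz : ∀ v, H u v = 0 := fun v => by
        simp only [hH]; exact if_neg (fun hcon => hB hcon.1)
      simp_rw [hz]
      exact lintegral_zero
  -- lower bound for the sum over l of J n (l+1)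
  have hsum_l : ∀ n, ∫⁻ ω, (Bev ξ c m n).indicator (fI ξ q g x n) ω ∂μ
      ≤ ∑' l : ℕ, J n (l + 1) := by
    intro n
    have hIN_meas : ∀ l, Measurable (fun u : Fin n → ℝ => if Bp c m n (ext u)
        then ENNReal.ofReal (Real.exp (-q * n)) * φ l (x + psum (ext u) n) else 0) :=
      fun l => Measurable.ite (measurableSet_Bp_ext c m n)
        (measurable_const.mul ((hφmeas l).comp (measurable_const.add (measurable_psum_ext n))))
        measurable_const
    have step1 : (∑' l : ℕ, J n (l + 1))
        = ∫⁻ u, (∑' l : ℕ, if Bp c m n (ext u)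
            then ENNReal.ofReal (Real.exp (-q * n)) * φ (l + 1) (x + psum (ext u) n) else 0)
            ∂(μ.map (Vv ξ 0 n)) := by
      simp_rw [hJ_eq]
      exact (lintegral_tsum (fun l => (hIN_meas (l + 1)).aemeasurable)).symm
    have step2 : ∫⁻ u, (∑' l : ℕ, if Bp c m n (ext u)
            then ENNReal.ofReal (Real.exp (-q * n)) * φ (l + 1) (x + psum (ext u) n) else 0)
            ∂(μ.map (Vv ξ 0 n))
        = ∫⁻ u, (if Bp c m n (ext u)
            then ENNReal.ofReal (Real.exp (-q * n)) * Phi μ ξ q g (x + psum (ext u) n) else 0)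
            ∂(μ.map (Vv ξ 0 n)) := by
      refine lintegral_congr (fun u => ?_)
      by_cases hB : Bp c m n (ext u)
      · simp only [hB, if_true]
        rw [ENNReal.tsum_mul_left, hPhi_succ]
      · simp only [hB, if_false]
        exact tsum_zero
    have step3 : ∫⁻ u, (if Bp c m n (ext u)
            then ENNReal.ofReal (Real.exp (-q * n) * g (x + psum (ext u) n)) else 0)
            ∂(μ.map (Vv ξ 0 n))
        ≤ ∫⁻ u, (if Bp c m n (ext u)
            then ENNReal.ofReal (Real.exp (-q * n)) * Phi μ ξ q g (x + psum (ext u) n) else 0)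
            ∂(μ.map (Vv ξ 0 n)) := by
      refine lintegral_mono (fun u => ?_)
      by_cases hB : Bp c m n (ext u)
      · simp only [hB, if_true]
        rw [ENNReal.ofReal_mul (le_of_lt (Real.exp_pos _))]
        refine mul_le_mul_right ?_ _
        refine hPhi_ge _ ?_
        have := hB.2.2
        simp only [hc] at this ⊢
        linarith
      · simp only [hB, if_false, le_refl]
    have step4 : ∫⁻ u, (if Bp c m n (ext u)
            then ENNReal.ofReal (Real.exp (-q * n) * g (x + psum (ext u) n)) else 0)
            ∂(μ.map (Vv ξ 0 n))
        = ∫⁻ ω, (Bev ξ c m n).indicator (fI ξ q g x n) ω ∂μ := by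
      rw [lintegral_map_Vv hmeas 0 n (fun u => if Bp c m n (ext u)
          then ENNReal.ofReal (Real.exp (-q * n) * g (x + psum (ext u) n)) else 0)
        (Measurable.ite (measurableSet_Bp_ext c m n)
          (Measurable.ennreal_ofReal (measurable_const.mul
            (hg.comp (measurable_const.add (measurable_psum_ext n))))) measurable_const)]
      refine lintegral_congr (fun ω => ?_)
      by_cases hB : ω ∈ Bev ξ c m n
      · have hB' : Bp c m n (ext (Vv ξ 0 n ω)) :=
          (Bp_congr (fun i hi => (ext_Vv0 i hi).symm)).1 hB
        rw [if_pos hB', Set.indicator_of_mem hB]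
        unfold fI
        rw [psum_inc_eq]
      · have hB' : ¬ Bp c m n (ext (Vv ξ 0 n ω)) := fun hcon =>
          hB ((Bp_congr (fun i hi => (ext_Vv0 i hi).symm)).2 hcon)
        rw [if_neg hB', Set.indicator_of_notMem hB]
    calc ∫⁻ ω, (Bev ξ c m n).indicator (fI ξ q g x n) ω ∂μ
        = ∫⁻ u, (if Bp c m n (ext u)
            then ENNReal.ofReal (Real.exp (-q * n) * g (x + psum (ext u) n)) else 0)
            ∂(μ.map (Vv ξ 0 n)) := step4.symm
      _ ≤ _ := step3
      _ = _ := step2.symm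
      _ = ∑' l : ℕ, J n (l + 1) := step1.symm
  -- ladder decomposition of cQ (m+1)
  set K : ℕ → ℕ → ℝ≥0∞ := fun n n' => if n < n' then J n (n' - n) else 0 with hK
  have hKsum : ∀ n', ∫⁻ ω, (Cev ξ c (m + 1) n').indicator (fI ξ q g x n') ω ∂μ
      = ∑' n, K n n' := by
    intro n'
    have hsplit : ∀ ω, (Cev ξ c (m + 1) n').indicator (fI ξ q g x n') ω
        = ∑ n ∈ Finset.range n',
            ((Bev ξ c m n) ∩ (Dev ξ n (n' - n))).indicator (fI ξ q g x n') ω := by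
      intro ω
      by_cases hC : ω ∈ Cev ξ c (m + 1) n'
      · obtain ⟨n, hn, hB, hE⟩ := Cp_decomp hC
        rw [Set.indicator_of_mem hC,
          Finset.sum_eq_single_of_mem n (Finset.mem_range.2 hn)]
        · rw [Set.indicator_of_mem
            (show ω ∈ (Bev ξ c m n) ∩ (Dev ξ n (n' - n)) from ⟨hB, Dev_mem.2 hE⟩)]
        · intro b hb hbn
          apply Set.indicator_of_notMem
          rintro ⟨hB', hD'⟩
          exact hbn (Bp_unique hB' hB)
      · rw [Set.indicator_of_notMem hC]
        symm
        apply Finset.sum_eq_zero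
        intro n hn
        apply Set.indicator_of_notMem
        rintro ⟨hB', hD'⟩
        apply hC
        have hCp := Cp_of_Bp_Ep hB' (Dev_mem.1 hD')
        have he : n + (n' - n) = n' := by
          have := Finset.mem_range.1 hn; omega
        rw [he] at hCp
        exact hCp
    have hmeasJ : ∀ n ∈ Finset.range n', Measurable (fun ω =>
        ((Bev ξ c m n) ∩ (Dev ξ n (n' - n))).indicator (fI ξ q g x n') ω) := fun n _ =>
      (measurable_fI hmeas hg q x n').indicator ((measurableSet_Bev hmeas c m n).inter
        ((measurable_Vv hmeas n (n' - n)) (measurableSet_Ep_ext (n' - n))))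
    rw [lintegral_congr hsplit, lintegral_finset_sum _ hmeasJ]
    rw [tsum_eq_sum (s := Finset.range n')
      (fun n hn => by rw [hK]; exact if_neg (by simpa using hn))]
    refine Finset.sum_congr rfl (fun n hn => ?_)
    simp only [hK]
    rw [if_pos (Finset.mem_range.1 hn)]
    have he : n + (n' - n) = n' := by have := Finset.mem_range.1 hn; omega
    simp only [hJ, he]
  have hKinner : ∀ n, (∑' n', K n n') = ∑' l : ℕ, J n (l + 1) := by
    intro n
    have hinj : Function.Injective (fun l : ℕ => n + (l + 1)) := by
      intro a b hab
      have : n + (a + 1) = n + (b + 1) := hab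
      omega
    have hsupp : (Function.support fun n' => K n n') ⊆ Set.range (fun l : ℕ => n + (l + 1)) := by
      intro n' hn'
      simp only [Function.mem_support, hK] at hn'
      by_cases hlt : n < n'
      · exact ⟨n' - n - 1, by show n + (n' - n - 1 + 1) = n'; omega⟩
      · exact absurd (if_neg hlt) hn'
    have := Function.Injective.tsum_eq (f := fun n' => K n n') hinj hsupp
    rw [← this]
    refine tsum_congr (fun l => ?_)
    simp only [hK]
    rw [if_pos (by omega : n < n + (l + 1))]
    have he : n + (l + 1) - n = l + 1 := by omega
    rw [he]
  calc bQ μ ξ q g x (y - x) m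
      = ∑' n : ℕ, ∫⁻ ω, (Bev ξ c m n).indicator (fI ξ q g x n) ω ∂μ := rfl
    _ ≤ ∑' n : ℕ, ∑' l : ℕ, J n (l + 1) := ENNReal.tsum_le_tsum hsum_l
    _ = ∑' n : ℕ, ∑' n' : ℕ, K n n' := by
        refine tsum_congr (fun n => ?_)
        rw [hKinner n]
    _ = ∑' n' : ℕ, ∑' n : ℕ, K n n' := ENNReal.tsum_comm
    _ = cQ μ ξ q g x (y - x) (m + 1) := by
        refine tsum_congr (fun n' => ?_)
        rw [← hKsum n']

/-! ### partition identities -/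

lemma Bev_disjoint {ξ : ℕ → Ω → ℝ} (c : ℝ) (m : ℕ) :
    Pairwise (Function.onFun Disjoint (fun n => Bev ξ c m n)) := by
  intro n n' hnn'
  rw [Function.onFun, Set.disjoint_left]
  intro ω hB hB'
  exact hnn' (Bp_unique hB hB')

lemma cQ_eq {μ : Measure Ω} {ξ : ℕ → Ω → ℝ} (hmeas : ∀ i, Measurable (ξ i))
    {g : ℝ → ℝ} (hg : Measurable g) (q x c : ℝ) (m : ℕ) :
    cQ μ ξ q g x c m = aQ μ ξ q g x c m + bQ μ ξ q g x c m := by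
  unfold cQ aQ bQ
  rw [← ENNReal.tsum_add]
  refine tsum_congr (fun n => ?_)
  rw [← lintegral_add_left ((measurable_fI hmeas hg q x n).indicator
    (measurableSet_Aev hmeas c m n))]
  refine lintegral_congr (fun ω => ?_)
  by_cases hA : ω ∈ Aev ξ c m n
  · rw [Set.indicator_of_mem (show ω ∈ Cev ξ c m n from Cp_iff_ApBp.2 (Or.inl hA)),
      Set.indicator_of_mem hA,
      Set.indicator_of_notMem (show ω ∉ Bev ξ c m n from fun hB => Ap_Bp_disjoint hA hB),
      add_zero]
  · by_cases hB : ω ∈ Bev ξ c m n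
    · rw [Set.indicator_of_mem (show ω ∈ Cev ξ c m n from Cp_iff_ApBp.2 (Or.inr hB)),
        Set.indicator_of_notMem hA, Set.indicator_of_mem hB, zero_add]
    · rw [Set.indicator_of_notMem (show ω ∉ Cev ξ c m n from fun hC => by
          rcases Cp_iff_ApBp.1 hC with h | h
          exacts [hA h, hB h]),
        Set.indicator_of_notMem hA, Set.indicator_of_notMem hB, add_zero]

lemma V_eq {μ : Measure Ω} {ξ : ℕ → Ω → ℝ} (hmeas : ∀ i, Measurable (ξ i))
    {g : ℝ → ℝ} (hg : Measurable g) (q x : ℝ) {c : ℝ} (hc : 0 < c) :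
    (∑' n : ℕ, ∫⁻ ω, (Fev ξ c n).indicator (fI ξ q g x n) ω ∂μ)
      = ∑' m : ℕ, aQ μ ξ q g x c (m + 1) := by
  have hpoint : ∀ n ω, (Fev ξ c n).indicator (fI ξ q g x n) ω
      = ∑' m : ℕ, (Aev ξ c (m + 1) n).indicator (fI ξ q g x n) ω := by
    intro n ω
    by_cases hF : ω ∈ Fev ξ c n
    · obtain ⟨m, hm⟩ := (Fp_iff_exists_Ap hc).1 hF
      rw [Set.indicator_of_mem hF, tsum_eq_single m ?_]
      · rw [Set.indicator_of_mem (show ω ∈ Aev ξ c (m + 1) n from hm)]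
      · intro b hb
        apply Set.indicator_of_notMem
        intro hA
        exact hb (by have := Ap_unique_m hA hm; omega)
    · rw [Set.indicator_of_notMem hF]
      symm
      rw [ENNReal.tsum_eq_zero]
      intro m
      apply Set.indicator_of_notMem
      intro hA
      exact hF ((Fp_iff_exists_Ap hc).2 ⟨m, hA⟩)
  calc (∑' n : ℕ, ∫⁻ ω, (Fev ξ c n).indicator (fI ξ q g x n) ω ∂μ)
      = ∑' n : ℕ, ∫⁻ ω, ∑' m : ℕ, (Aev ξ c (m + 1) n).indicator (fI ξ q g x n) ω ∂μ := by
        refine tsum_congr (fun n => lintegral_congr (fun ω => ?_))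
        exact hpoint n ω
    _ = ∑' n : ℕ, ∑' m : ℕ, ∫⁻ ω, (Aev ξ c (m + 1) n).indicator (fI ξ q g x n) ω ∂μ := by
        refine tsum_congr (fun n => ?_)
        exact lintegral_tsum (fun m => ((measurable_fI hmeas hg q x n).indicator
          (measurableSet_Aev hmeas c (m + 1) n)).aemeasurable)
    _ = ∑' m : ℕ, ∑' n : ℕ, ∫⁻ ω, (Aev ξ c (m + 1) n).indicator (fI ξ q g x n) ω ∂μ :=
        ENNReal.tsum_comm
    _ = ∑' m : ℕ, aQ μ ξ q g x c (m + 1) := rfl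

lemma bQ_zero {μ : Measure Ω} [IsProbabilityMeasure μ] {ξ : ℕ → Ω → ℝ}
    (q : ℝ) (g : ℝ → ℝ) (x : ℝ) {c : ℝ} (hc : 0 < c) :
    bQ μ ξ q g x c 0 = ENNReal.ofReal (g x) := by
  unfold bQ
  rw [tsum_eq_single 0 ?_]
  · have hB : Bev ξ c 0 0 = Set.univ := by
      ext ω
      simp [Bev, Bp, isRec_zero, cnt_zero, psum_zero, hc]
    have hf : fI ξ q g x 0 = fun _ : Ω => ENNReal.ofReal (g x) := by
      funext ω
      unfold fI
      norm_num [psum_zero]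
    rw [hB, hf, Set.indicator_univ, lintegral_const, measure_univ, mul_one]
  · intro n hn
    have hB : Bev ξ c 0 n = (∅ : Set Ω) := by
      ext ω
      simp only [Bev, Set.mem_setOf_eq, Set.mem_empty_iff_false, iff_false]
      rintro ⟨h1, h2, h3⟩
      have hpos : 0 < n := Nat.pos_of_ne_zero hn
      have := cnt_lt_of_rec (isRec_zero (inc ξ ω)) hpos
      rw [cnt_zero] at this
      omega
    rw [hB]
    simp

/-! ### the decay of the continuation terms -/

lemma bQ_le_G {μ : Measure Ω} [IsProbabilityMeasure μ] {ξ : ℕ → Ω → ℝ}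
    (hmeas : ∀ i, Measurable (ξ i)) {g : ℝ → ℝ} (hg : Measurable g) (hg0 : ∀ x, 0 ≤ g x)
    (hgmono : Monotone g) {q x y : ℝ} (hq : 0 ≤ q) (m : ℕ) :
    bQ μ ξ q g x (y - x) m ≤ ENNReal.ofReal (g y) * μ (⋃ n, Bev ξ (y - x) m n) := by
  unfold bQ
  rw [measure_iUnion (Bev_disjoint (y - x) m) (fun n => measurableSet_Bev hmeas (y - x) m n),
    ← ENNReal.tsum_mul_left]
  refine ENNReal.tsum_le_tsum (fun n => ?_)
  have hpt : ∀ ω, (Bev ξ (y - x) m n).indicator (fI ξ q g x n) ω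
      ≤ (Bev ξ (y - x) m n).indicator (fun _ => ENNReal.ofReal (g y)) ω := by
    intro ω
    by_cases hB : ω ∈ Bev ξ (y - x) m n
    · rw [Set.indicator_of_mem hB, Set.indicator_of_mem hB]
      unfold fI
      apply ENNReal.ofReal_le_ofReal
      have h1 : Real.exp (-q * n) ≤ 1 := by
        rw [Real.exp_le_one_iff]
        have : (0:ℝ) ≤ q * n := mul_nonneg hq (Nat.cast_nonneg n)
        linarith
      have h2 : g (x + psum (inc ξ ω) n) ≤ g y := by
        apply hgmono
        have := hB.2.2
        linarith
      calc Real.exp (-q * n) * g (x + psum (inc ξ ω) n)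
          ≤ 1 * g y := mul_le_mul h1 h2 (hg0 _) zero_le_one
        _ = g y := one_mul _
    · rw [Set.indicator_of_notMem hB, Set.indicator_of_notMem hB]
  calc ∫⁻ ω, (Bev ξ (y - x) m n).indicator (fI ξ q g x n) ω ∂μ
      ≤ ∫⁻ ω, (Bev ξ (y - x) m n).indicator (fun _ => ENNReal.ofReal (g y)) ω ∂μ :=
        lintegral_mono hpt
    _ = ENNReal.ofReal (g y) * μ (Bev ξ (y - x) m n) :=
        lintegral_indicator_const (measurableSet_Bev hmeas (y - x) m n) _

lemma G_decay {μ : Measure Ω} [IsProbabilityMeasure μ] {ξ : ℕ → Ω → ℝ}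
    (hmeas : ∀ i, Measurable (ξ i))
    (hindep : iIndepFun ξ μ)
    (hident : ∀ i, μ.map (ξ i) = μ.map (ξ 1))
    {c δ : ℝ} (hδ : 0 < δ) {N : ℕ} (hN : c ≤ N * δ) (m : ℕ) :
    μ (⋃ n, Bev ξ c (m + N) n)
      ≤ (μ.map (Vv ξ 0 N)) ((Set.pi Set.univ (fun _ : Fin N => Set.Ici δ))ᶜ)
        * μ (⋃ n, Bev ξ c m n) := by
  classical
  set box : Set (Fin N → ℝ) := Set.pi Set.univ (fun _ => Set.Ici δ) with hbox
  have hboxm : MeasurableSet box := MeasurableSet.univ_pi (fun _ => measurableSet_Ici)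
  have hsub : (⋃ n, Bev ξ c (m + N) n) ⊆ ⋃ n, (Bev ξ c m n ∩ (Vv ξ n N ⁻¹' boxᶜ)) := by
    intro ω hω
    obtain ⟨n', hω⟩ := Set.mem_iUnion.1 hω
    obtain ⟨n, hB, hnot⟩ := decay_path hδ hN hω
    refine Set.mem_iUnion.2 ⟨n, hB, ?_⟩
    intro hmem
    apply hnot
    intro j hj
    have := hmem ⟨j, hj⟩ (Set.mem_univ _)
    simpa [Vv, inc] using this
  calc μ (⋃ n, Bev ξ c (m + N) n)
      ≤ μ (⋃ n, (Bev ξ c m n ∩ (Vv ξ n N ⁻¹' boxᶜ))) := measure_mono hsub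
    _ ≤ ∑' n, μ (Bev ξ c m n ∩ (Vv ξ n N ⁻¹' boxᶜ)) := measure_iUnion_le _
    _ = ∑' n, μ (Bev ξ c m n) * μ (Vv ξ n N ⁻¹' boxᶜ) := by
        refine tsum_congr (fun n => ?_)
        rw [Bev_eq]
        exact (indep_V hmeas hindep n N).measure_inter_preimage_eq_mul _ _
          (measurableSet_Bp_ext c m n) hboxm.compl
    _ = ∑' n, μ (Bev ξ c m n) * (μ.map (Vv ξ 0 N)) boxᶜ := by
        refine tsum_congr (fun n => ?_)
        congr 1
        rw [← Measure.map_apply (measurable_Vv hmeas n N) hboxm.compl,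
          map_Vv_pi hmeas hindep hident n N, ← map_Vv_pi hmeas hindep hident 0 N,
          Measure.map_apply (measurable_Vv hmeas 0 N) hboxm.compl]
    _ = (μ.map (Vv ξ 0 N)) boxᶜ * μ (⋃ n, Bev ξ c m n) := by
        rw [ENNReal.tsum_mul_right,
          measure_iUnion (Bev_disjoint c m) (fun n => measurableSet_Bev hmeas c m n),
          mul_comm]

end Stmt9Aux

open Stmt9Aux in
theorem stmt9 [MeasurableSpace Ω] (μ : Measure Ω) [IsProbabilityMeasure μ]
    (ξ : ℕ → Ω → ℝ) (hmeas : ∀ i, Measurable (ξ i))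
    (hindep : iIndepFun ξ μ)
    (hident : ∀ i, μ.map (ξ i) = μ.map (ξ 1))
    (hξpos : 0 < μ {ω | 0 < ξ 1 ω})
    (q : ℝ) (hq : 0 ≤ q)
    (g : ℝ → ℝ) (hg0 : ∀ x, 0 ≤ g x) (hgnc : ∃ a b : ℝ, g a ≠ g b)
    (hgmono : Monotone g)
    (hglc : ∀ a b θ : ℝ, 0 < θ → θ < 1 →
      g a ^ θ * g b ^ (1 - θ) ≤ g (θ * a + (1 - θ) * b))
    (y : ℝ) (hy : ∃ s : ℝ, s < y ∧ 0 < g s)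
    (hcont : ENNReal.ofReal (g y)
      ≤ ∫⁻ ω, payoff q g (walk y ξ) (hitFrom1 (walk y ξ) y) ω ∂μ) :
    ∀ x : ℝ, x < y →
      ENNReal.ofReal (g x)
        ≤ ∫⁻ ω, payoff q g (walk x ξ) (hitFrom0 (walk x ξ) y) ω ∂μ := by
  intro x hxy
  classical
  obtain ⟨s, hs, hgs⟩ := hy
  have hgy : 0 < g y := lt_of_lt_of_le hgs (hgmono (le_of_lt hs))
  have hgmeas : Measurable g := hgmono.measurable
  have hres : ENNReal.ofReal (g y) ≤ Phi μ ξ q g y := by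
    rw [← lintegral_payoff1 hmeas hgmeas q y]
    exact hcont
  have hc0 : 0 < y - x := sub_pos.2 hxy
  -- choose a jump size δ with positive probability
  have hδex : ∃ δ : ℝ, 0 < δ ∧ 0 < μ {ω | δ ≤ ξ 1 ω} := by
    by_contra hno
    push_neg at hno
    have hcover : {ω | 0 < ξ 1 ω} ⊆ ⋃ k : ℕ, {ω | 1 / ((k : ℝ) + 1) ≤ ξ 1 ω} := by
      intro ω hω
      have hω' : (0 : ℝ) < ξ 1 ω := hω
      obtain ⟨k, hk⟩ := exists_nat_gt (1 / ξ 1 ω)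
      refine Set.mem_iUnion.2 ⟨k, ?_⟩
      have h1 : (0 : ℝ) < (k : ℝ) + 1 := by positivity
      show 1 / ((k : ℝ) + 1) ≤ ξ 1 ω
      rw [div_le_iff₀ h1]
      have h4 : 1 / ξ 1 ω < (k : ℝ) + 1 := lt_trans hk (by linarith)
      have h3 := (div_lt_iff₀ hω').1 h4
      nlinarith
    have hz : μ {ω | 0 < ξ 1 ω} = 0 := measure_mono_null hcover
      (measure_iUnion_null (fun k => nonpos_iff_eq_zero.1
        (hno (1 / ((k : ℝ) + 1)) (by positivity))))
    rw [hz] at hξpos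
    exact lt_irrefl _ hξpos
  obtain ⟨δ, hδ, hρ⟩ := hδex
  have hN : y - x ≤ (Nat.ceil ((y - x) / δ) : ℝ) * δ := by
    have h1 := Nat.le_ceil ((y - x) / δ)
    calc y - x = ((y - x) / δ) * δ := by field_simp
      _ ≤ (Nat.ceil ((y - x) / δ) : ℝ) * δ := mul_le_mul_of_nonneg_right h1 (le_of_lt hδ)
  set N : ℕ := Nat.ceil ((y - x) / δ) with hNdef
  set box : Set (Fin N → ℝ) := Set.pi Set.univ (fun _ => Set.Ici δ) with hbox
  have hboxm : MeasurableSet box := MeasurableSet.univ_pi (fun _ => measurableSet_Ici)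
  haveI : IsProbabilityMeasure (μ.map (ξ 1)) := Measure.isProbabilityMeasure_map (hmeas 1).aemeasurable
  haveI : IsProbabilityMeasure (μ.map (Vv ξ 0 N)) :=
    Measure.isProbabilityMeasure_map (measurable_Vv hmeas 0 N).aemeasurable
  have hνbox : (μ.map (Vv ξ 0 N)) box = ((μ.map (ξ 1)) (Set.Ici δ)) ^ N := by
    rw [hbox, map_Vv_pi hmeas hindep hident 0 N, Measure.pi_pi]
    simp [Finset.prod_const]
  have hρ' : 0 < (μ.map (ξ 1)) (Set.Ici δ) := by
    rw [Measure.map_apply (hmeas 1) measurableSet_Ici]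
    exact hρ
  set r : ENNReal := (μ.map (Vv ξ 0 N)) boxᶜ with hr
  have hr1 : r < 1 := by
    rw [hr, prob_compl_eq_one_sub hboxm, hνbox]
    exact ENNReal.sub_lt_self ENNReal.one_ne_top one_ne_zero (pow_ne_zero N (ne_of_gt hρ'))
  have hstep : ∀ m, bQ μ ξ q g x (y - x) m
      ≤ aQ μ ξ q g x (y - x) (m + 1) + bQ μ ξ q g x (y - x) (m + 1) := by
    intro m
    rw [← cQ_eq hmeas hgmeas q x (y - x) (m + 1)]
    exact step_ineq hmeas hindep hident hgmeas hg0 hgmono hglc hxy hgy hres m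
  have hind : ∀ m, ENNReal.ofReal (g x)
      ≤ (∑ k ∈ Finset.range m, aQ μ ξ q g x (y - x) (k + 1)) + bQ μ ξ q g x (y - x) m := by
    intro m
    induction m with
    | zero =>
        rw [Finset.range_zero, Finset.sum_empty, zero_add, bQ_zero q g x hc0]
    | succ m ih =>
        calc ENNReal.ofReal (g x)
            ≤ (∑ k ∈ Finset.range m, aQ μ ξ q g x (y - x) (k + 1))
              + bQ μ ξ q g x (y - x) m := ih
          _ ≤ (∑ k ∈ Finset.range m, aQ μ ξ q g x (y - x) (k + 1))
              + (aQ μ ξ q g x (y - x) (m + 1) + bQ μ ξ q g x (y - x) (m + 1)) :=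
              add_le_add le_rfl (hstep m)
          _ = (∑ k ∈ Finset.range (m + 1), aQ μ ξ q g x (y - x) (k + 1))
              + bQ μ ξ q g x (y - x) (m + 1) := by
              rw [Finset.sum_range_succ, add_assoc]
  have hGj : ∀ j : ℕ, μ (⋃ n, Bev ξ (y - x) (N * j) n) ≤ r ^ j := by
    intro j
    induction j with
    | zero => simpa using prob_le_one
    | succ j ih =>
        have he : N * (j + 1) = N * j + N := by ring
        rw [he]
        calc μ (⋃ n, Bev ξ (y - x) (N * j + N) n)
            ≤ r * μ (⋃ n, Bev ξ (y - x) (N * j) n) :=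
              G_decay hmeas hindep hident hδ hN (N * j)
          _ ≤ r * r ^ j := mul_le_mul_right ih r
          _ = r ^ (j + 1) := by ring
  have hbQj : ∀ j : ℕ, bQ μ ξ q g x (y - x) (N * j) ≤ ENNReal.ofReal (g y) * r ^ j := fun j =>
    le_trans (bQ_le_G hmeas hgmeas hg0 hgmono hq (N * j))
      (mul_le_mul_right (hGj j) _)
  rw [lintegral_payoff0 hmeas hgmeas q x y, V_eq hmeas hgmeas q x hc0]
  refine ENNReal.le_of_forall_pos_le_add (fun ε hε _ => ?_)
  have htend : Filter.Tendsto (fun j : ℕ => ENNReal.ofReal (g y) * r ^ j)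
      Filter.atTop (nhds 0) := by
    have h0 := ENNReal.tendsto_pow_atTop_nhds_zero_of_lt_one hr1
    have h1 := ENNReal.Tendsto.const_mul (a := ENNReal.ofReal (g y)) h0 (Or.inr ENNReal.ofReal_ne_top)
    simpa using h1
  have hev := htend.eventually_lt_const (show (0 : ENNReal) < (ε : ENNReal) by exact_mod_cast hε)
  obtain ⟨j, hj⟩ := hev.exists
  calc ENNReal.ofReal (g x)
      ≤ (∑ k ∈ Finset.range (N * j), aQ μ ξ q g x (y - x) (k + 1))
        + bQ μ ξ q g x (y - x) (N * j) := hind _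
    _ ≤ (∑' m, aQ μ ξ q g x (y - x) (m + 1)) + bQ μ ξ q g x (y - x) (N * j) :=
        add_le_add (ENNReal.sum_le_tsum _) le_rfl
    _ ≤ (∑' m, aQ μ ξ q g x (y - x) (m + 1)) + ε :=
        add_le_add le_rfl (le_of_lt (lt_of_le_of_lt (hbQj j) hj))
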